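/- arXiv:2104.01516 — 6 statements merged into one kernel-verified Lean document; each statement's English description precedes it below -/
import Mathlib

section
/- Let H be a real Hilbert space, V a closed vector subspace of H, A: H → 2^H a maximally monotone operator, and γ > 0. Then the partial inverse (γA)_V of γA with respect to V, defined by y ∈ (γA)_V x ⇔ P_V y + P_{V⊥} x ∈ γA(P_V x + P_{V⊥} y), is maximally monotone. -/
open RealInnerProductSpace Pointwise

variable {H : Type*} [NormedAddCommGroup H] [InnerProductSpace ℝ H] [CompleteSpace H]

/-- A set-valued operator is monotone. -/
def MonotoneSV (A : H → Set H) : Prop :=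
  ∀ x y u v, u ∈ A x → v ∈ A y → 0 ≤ ⟪x - y, u - v⟫

/-- A set-valued operator is maximally monotone. -/
def MaxMonotoneSV (A : H → Set H) : Prop :=
  MonotoneSV A ∧ ∀ x u, (∀ y v, v ∈ A y → 0 ≤ ⟪x - y, u - v⟫) → u ∈ A x

/-- Partial inverse of `A` with respect to the closed subspace `V`. -/
noncomputable def partialInv (V : Submodule ℝ H) [CompleteSpace V] (A : H → Set H) :
    H → Set H := fun x =>
  {y | (Submodule.orthogonalProjectionOnto V y : H) + (Submodule.orthogonalProjectionOnto Vᗮ x : H)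
      ∈ A ((Submodule.orthogonalProjectionOnto V x : H) + (Submodule.orthogonalProjectionOnto Vᗮ y : H))}

lemma orthogonalProjection_add_orthogonalProjection_orthogonal (V : Submodule ℝ H)
    [CompleteSpace V] (w : H) :
    (Submodule.orthogonalProjectionOnto V w : H) + (Submodule.orthogonalProjectionOnto Vᗮ w : H) = w :=
  Submodule.starProjection_add_starProjection_orthogonal w

lemma smul_maxMonotoneSV (A : H → Set H) (γ : ℝ) (hγ : 0 < γ) (hA : MaxMonotoneSV A) :
    MaxMonotoneSV (fun x => (γ • A x : Set H)) := by
  constructor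
  · intro x y u v hu hv
    obtain ⟨u', hu', rfl⟩ := hu
    obtain ⟨v', hv', rfl⟩ := hv
    rw [← smul_sub, real_inner_smul_right]
    exact mul_nonneg hγ.le (hA.1 x y u' v' hu' hv')
  · intro x u h
    have key : γ⁻¹ • u ∈ A x := by
      apply hA.2
      intro y v hv
      have := h y (γ • v) ⟨v, hv, rfl⟩
      have h2 : u - γ • v = γ • (γ⁻¹ • u - v) := by
        rw [smul_sub, smul_inv_smul₀ hγ.ne']
      rw [h2, real_inner_smul_right] at this
      exact nonneg_of_mul_nonneg_right this hγ
    exact ⟨γ⁻¹ • u, key, by simp [smul_inv_smul₀ hγ.ne']⟩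

lemma inner_split_mem (V : Submodule ℝ H) (p r q s : H) (hp : p ∈ V) (hr : r ∈ V)
    (hq : q ∈ Vᗮ) (hs : s ∈ Vᗮ) : ⟪p + q, r + s⟫ = ⟪p, r⟫ + ⟪q, s⟫ := by
  have z1 : ⟪p, s⟫ = (0 : ℝ) := Submodule.inner_right_of_mem_orthogonal hp hs
  have z2 : ⟪q, r⟫ = (0 : ℝ) := by
    rw [real_inner_comm]; exact Submodule.inner_right_of_mem_orthogonal hr hq
  rw [inner_add_left, inner_add_right, inner_add_right, z1, z2]
  ring

lemma inner_swap_core (V : Submodule ℝ H) (a a' c c' b b' d d' : H)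
    (ha : a ∈ V) (ha' : a' ∈ V) (hc : c ∈ V) (hc' : c' ∈ V)
    (hb : b ∈ Vᗮ) (hb' : b' ∈ Vᗮ) (hd : d ∈ Vᗮ) (hd' : d' ∈ Vᗮ) :
    ⟪(a + b) - (a' + b'), (c + d) - (c' + d')⟫
      = ⟪(a + d) - (a' + d'), (c + b) - (c' + b')⟫ := by
  have e1 : (a + b) - (a' + b') = (a - a') + (b - b') := by abel
  have e2 : (c + d) - (c' + d') = (c - c') + (d - d') := by abel
  have e3 : (a + d) - (a' + d') = (a - a') + (d - d') := by abel
  have e4 : (c + b) - (c' + b') = (c - c') + (b - b') := by abel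
  rw [e1, e2, e3, e4,
    inner_split_mem V _ _ _ _ (V.sub_mem ha ha') (V.sub_mem hc hc')
      (Vᗮ.sub_mem hb hb') (Vᗮ.sub_mem hd hd'),
    inner_split_mem V _ _ _ _ (V.sub_mem ha ha') (V.sub_mem hc hc')
      (Vᗮ.sub_mem hd hd') (Vᗮ.sub_mem hb hb'),
    real_inner_comm (b - b') (d - d')]

/-- Key swap identity. -/
lemma inner_swap (V : Submodule ℝ H) [CompleteSpace V] (x y u v : H) :
    ⟪x - y, u - v⟫ =
      ⟪((Submodule.orthogonalProjectionOnto V x : H) + (Submodule.orthogonalProjectionOnto Vᗮ u : H))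
        - ((Submodule.orthogonalProjectionOnto V y : H) + (Submodule.orthogonalProjectionOnto Vᗮ v : H)),
       ((Submodule.orthogonalProjectionOnto V u : H) + (Submodule.orthogonalProjectionOnto Vᗮ x : H))
        - ((Submodule.orthogonalProjectionOnto V v : H) + (Submodule.orthogonalProjectionOnto Vᗮ y : H))⟫ := by
  conv_lhs =>
    rw [← orthogonalProjection_add_orthogonalProjection_orthogonal V x,
      ← orthogonalProjection_add_orthogonalProjection_orthogonal V y,
      ← orthogonalProjection_add_orthogonalProjection_orthogonal V u,
      ← orthogonalProjection_add_orthogonalProjection_orthogonal V v]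
  exact inner_swap_core V _ _ _ _ _ _ _ _
    (Submodule.orthogonalProjectionOnto V x).2 (Submodule.orthogonalProjectionOnto V y).2
    (Submodule.orthogonalProjectionOnto V u).2 (Submodule.orthogonalProjectionOnto V v).2
    (Submodule.orthogonalProjectionOnto Vᗮ x).2 (Submodule.orthogonalProjectionOnto Vᗮ y).2
    (Submodule.orthogonalProjectionOnto Vᗮ u).2 (Submodule.orthogonalProjectionOnto Vᗮ v).2

lemma partialInv_maxMonotoneSV (V : Submodule ℝ H) [CompleteSpace V]
    (B : H → Set H) (hB : MaxMonotoneSV B) : MaxMonotoneSV (partialInv V B) := by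
  have pV : ∀ a : H, a ∈ V → (Submodule.orthogonalProjectionOnto V a : H) = a := fun a ha =>
    (Submodule.starProjection_eq_self_iff).2 ha
  have pVW : ∀ a : H, a ∈ Vᗮ → (Submodule.orthogonalProjectionOnto V a : H) = 0 := fun a ha => by
    rw [Submodule.orthogonalProjectionOnto_apply_of_mem_orthogonal ha,
      ZeroMemClass.coe_zero]
  have pWV : ∀ a : H, a ∈ V → (Submodule.orthogonalProjectionOnto Vᗮ a : H) = 0 := fun a ha => by
    rw [Submodule.orthogonalProjectionOnto_orthogonal_apply_eq_zero ha,
      ZeroMemClass.coe_zero]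
  have pW : ∀ a : H, a ∈ Vᗮ → (Submodule.orthogonalProjectionOnto Vᗮ a : H) = a := fun a ha =>
    (Submodule.starProjection_eq_self_iff).2 ha
  constructor
  · intro x y u v hu hv
    rw [inner_swap V x y u v]
    exact hB.1 _ _ _ _ hu hv
  · intro x u h
    show (Submodule.orthogonalProjectionOnto V u : H) + (Submodule.orthogonalProjectionOnto Vᗮ x : H)
        ∈ B ((Submodule.orthogonalProjectionOnto V x : H) + (Submodule.orthogonalProjectionOnto Vᗮ u : H))
    apply hB.2
    intro y' v' hv'
    set y := (Submodule.orthogonalProjectionOnto V y' : H) + (Submodule.orthogonalProjectionOnto Vᗮ v' : H) with hy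
    set v := (Submodule.orthogonalProjectionOnto V v' : H) + (Submodule.orthogonalProjectionOnto Vᗮ y' : H) with hv
    have hyV : (Submodule.orthogonalProjectionOnto V y : H) = (Submodule.orthogonalProjectionOnto V y' : H) := by
      rw [hy]; push_cast [map_add]
      rw [pV _ (Submodule.orthogonalProjectionOnto V _).2, pVW _ (Submodule.orthogonalProjectionOnto Vᗮ _).2, add_zero]
    have hyW : (Submodule.orthogonalProjectionOnto Vᗮ y : H) = (Submodule.orthogonalProjectionOnto Vᗮ v' : H) := by
      rw [hy]; push_cast [map_add]
      rw [pW _ (Submodule.orthogonalProjectionOnto Vᗮ _).2, pWV _ (Submodule.orthogonalProjectionOnto V _).2, zero_add]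
    have hvV : (Submodule.orthogonalProjectionOnto V v : H) = (Submodule.orthogonalProjectionOnto V v' : H) := by
      rw [hv]; push_cast [map_add]
      rw [pV _ (Submodule.orthogonalProjectionOnto V _).2, pVW _ (Submodule.orthogonalProjectionOnto Vᗮ _).2, add_zero]
    have hvW : (Submodule.orthogonalProjectionOnto Vᗮ v : H) = (Submodule.orthogonalProjectionOnto Vᗮ y' : H) := by
      rw [hv]; push_cast [map_add]
      rw [pW _ (Submodule.orthogonalProjectionOnto Vᗮ _).2, pWV _ (Submodule.orthogonalProjectionOnto V _).2, zero_add]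
    have hvmem : v ∈ partialInv V B y := by
      show (Submodule.orthogonalProjectionOnto V v : H) + (Submodule.orthogonalProjectionOnto Vᗮ y : H)
          ∈ B ((Submodule.orthogonalProjectionOnto V y : H) + (Submodule.orthogonalProjectionOnto Vᗮ v : H))
      rw [hvV, hyW, hyV, hvW,
        orthogonalProjection_add_orthogonalProjection_orthogonal V v',
        orthogonalProjection_add_orthogonalProjection_orthogonal V y']
      exact hv'
    have key := h y v hvmem
    rw [inner_swap V x y u v, hyV, hyW, hvV, hvW,
      orthogonalProjection_add_orthogonalProjection_orthogonal V y',
      orthogonalProjection_add_orthogonalProjection_orthogonal V v'] at key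
    exact key

theorem partialInv_of_smul_maxMonotone (V : Submodule ℝ H) [CompleteSpace V]
    (A : H → Set H) (γ : ℝ) (hγ : 0 < γ) (hA : MaxMonotoneSV A) :
    MaxMonotoneSV (partialInv V (fun x => (γ • A x : Set H))) := by
  exact partialInv_maxMonotoneSV V _ (smul_maxMonotoneSV A γ hγ hA)
end

section
/- Let H be a real Hilbert space, V a closed vector subspace, A: H → 2^H maximally monotone, B: H → H monotone and L-Lipschitzian, C: H → H β-cocoercive, and γ > 0. Define A_γ = (γA)_V, B_γ = γ P_V ∘ B ∘ P_V, C_γ = γ P_V ∘ C ∘ P_V. Then a point x̂ ∈ H satisfies 0 ∈ A x̂ + B x̂ + C x̂ + N_V x̂ if and only if x̂ ∈ V and there exists ŷ ∈ V⊥ ∩ (A x̂ + B x̂ + C x̂) such that x̂ + γ(ŷ − P_{V⊥}(B+C)x̂) ∈ zer(A_γ + B_γ + C_γ). -/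
open RealInnerProductSpace Pointwise

variable {H : Type*} [NormedAddCommGroup H] [InnerProductSpace ℝ H] [CompleteSpace H]

/-- Normal cone to the closed subspace `V`. -/
def normalCone (V : Submodule ℝ H) : H → Set H := fun x =>
  {u | x ∈ V ∧ u ∈ Vᗮ}

theorem solution_characterization (V : Submodule ℝ H) [CompleteSpace V]
    (A : H → Set H) (B C : H → H) (L β γ : ℝ) (hL : 0 < L) (hβ : 0 < β) (hγ : 0 < γ)
    (hA : MaxMonotoneSV A)
    (hBmon : ∀ x y, 0 ≤ ⟪x - y, B x - B y⟫)
    (hBlip : ∀ x y, ‖B x - B y‖ ≤ L * ‖x - y‖)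
    (hC : ∀ x y, β * ‖C x - C y‖ ^ 2 ≤ ⟪x - y, C x - C y⟫)
    (xh : H) :
    (∃ a n, a ∈ A xh ∧ n ∈ normalCone V xh ∧ a + B xh + C xh + n = 0) ↔
    (xh ∈ V ∧ ∃ yh, yh ∈ Vᗮ ∧ yh - B xh - C xh ∈ A xh ∧
      (∃ a, a ∈ partialInv V (fun x => (γ • A x : Set H))
              (xh + γ • (yh - (Submodule.orthogonalProjectionOnto Vᗮ (B xh + C xh) : H))) ∧
        a + γ • (Submodule.orthogonalProjectionOnto V (B (Submodule.orthogonalProjectionOnto V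
              (xh + γ • (yh - (Submodule.orthogonalProjectionOnto Vᗮ (B xh + C xh) : H)))) ) : H)
          + γ • (Submodule.orthogonalProjectionOnto V (C (Submodule.orthogonalProjectionOnto V
              (xh + γ • (yh - (Submodule.orthogonalProjectionOnto Vᗮ (B xh + C xh) : H)))) ) : H) = 0)) := by
  constructor
  · rintro ⟨a, n, ha, ⟨hxV, hnV⟩, heq⟩
    have h1 : -n - B xh - C xh = a := by
      apply eq_of_sub_eq_zero
      rw [show -n - B xh - C xh - a = -(a + B xh + C xh + n) by abel, heq, neg_zero]
    refine ⟨hxV, -n, neg_mem hnV, by rwa [h1], ?_⟩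
    set w : H := -n - (Submodule.orthogonalProjectionOnto Vᗮ (B xh + C xh) : H) with hw
    have hwV : w ∈ Vᗮ := sub_mem (neg_mem hnV) (Submodule.orthogonalProjectionOnto Vᗮ (B xh + C xh)).2
    set z : H := xh + γ • w with hz
    have hxVV : xh ∈ Vᗮᗮ := (Submodule.orthogonal_orthogonal V).symm ▸ hxV
    have hPVz : (Submodule.orthogonalProjectionOnto V z : H) = xh := by
      rw [hz, map_add, map_smul,
        Submodule.orthogonalProjectionOnto_apply_of_mem_orthogonal hwV,
        smul_zero, add_zero, ← Submodule.starProjection_apply, Submodule.starProjection_eq_self_iff.2 hxV]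
    have hPVpz : (Submodule.orthogonalProjectionOnto Vᗮ z : H) = γ • w := by
      rw [hz, map_add, map_smul,
        Submodule.orthogonalProjectionOnto_apply_of_mem_orthogonal hxVV,
        zero_add, Submodule.coe_smul, ← Submodule.starProjection_apply, Submodule.starProjection_eq_self_iff.2 hwV]
    set p : H := (Submodule.orthogonalProjectionOnto V (B xh) : H) with hp
    set q : H := (Submodule.orthogonalProjectionOnto V (C xh) : H) with hq
    set r : H := (Submodule.orthogonalProjectionOnto Vᗮ (B xh + C xh) : H) with hr
    set a' : H := -(γ • (p + q)) with ha'
    have ha'V : a' ∈ V := neg_mem (Submodule.smul_mem _ _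
      (add_mem (Submodule.orthogonalProjectionOnto V (B xh)).2 (Submodule.orthogonalProjectionOnto V (C xh)).2))
    have ha'VV : a' ∈ Vᗮᗮ := (Submodule.orthogonal_orthogonal V).symm ▸ ha'V
    have hadd : (Submodule.orthogonalProjectionOnto V (B xh + C xh) : H) = p + q := by
      rw [map_add, Submodule.coe_add]
    have hthis : p + q + r = B xh + C xh := by
      rw [← hadd]
      exact Submodule.starProjection_add_starProjection_orthogonal (K := V) (B xh + C xh)
    have key : a' + γ • w = γ • (-n - B xh - C xh) := by
      rw [ha', hw]
      linear_combination (norm := module) (-γ : ℝ) • hthis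
    refine ⟨a', ?_, ?_⟩
    · show (Submodule.orthogonalProjectionOnto V a' : H) + (Submodule.orthogonalProjectionOnto Vᗮ z : H)
        ∈ γ • A ((Submodule.orthogonalProjectionOnto V z : H) + (Submodule.orthogonalProjectionOnto Vᗮ a' : H))
      rw [hPVz, hPVpz, ← Submodule.starProjection_apply V a', Submodule.starProjection_eq_self_iff.2 ha'V,
        Submodule.orthogonalProjectionOnto_apply_of_mem_orthogonal ha'VV,
        Submodule.coe_zero, add_zero, key]
      exact Set.smul_mem_smul_set (by rwa [h1])
    · rw [hPVz, ha', smul_add]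
      abel
  · rintro ⟨hxV, yh, hyV, hAy, -⟩
    exact ⟨yh - B xh - C xh, -yh, hAy, ⟨hxV, neg_mem hyV⟩, by abel⟩
end

section
/- Let H be a real Hilbert space, V a closed vector subspace, A: H → 2^H maximally monotone, γ > 0, λ > 0, and z ∈ H. Then s = J_{λ(γA)_V} z if and only if there exist p, q ∈ H with z = p + γq, (P_V q)/λ + P_{V⊥} q ∈ A(P_V p + (P_{V⊥} p)/λ), and s = P_V p + γ P_{V⊥} q. -/
open RealInnerProductSpace Pointwise

variable {H : Type*} [NormedAddCommGroup H] [InnerProductSpace ℝ H] [CompleteSpace H]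

section helpers

omit [CompleteSpace H]

lemma projV_of_memV (V : Submodule ℝ H) [CompleteSpace V] {x : H} (hx : x ∈ V) :
    (Submodule.orthogonalProjectionOnto V x : H) = x := by
  rw [Submodule.coe_orthogonalProjectionOnto_apply, Submodule.starProjection_eq_self_iff.mpr hx]

lemma projV_of_memW (V : Submodule ℝ H) [CompleteSpace V] {x : H} (hx : x ∈ Vᗮ) :
    (Submodule.orthogonalProjectionOnto V x : H) = 0 := by
  rw [Submodule.orthogonalProjectionOnto_apply_of_mem_orthogonal hx]
  simp

lemma projW_of_memW (V : Submodule ℝ H) [CompleteSpace V] [CompleteSpace Vᗮ] {x : H}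
    (hx : x ∈ Vᗮ) : (Submodule.orthogonalProjectionOnto Vᗮ x : H) = x := by
  rw [Submodule.coe_orthogonalProjectionOnto_apply, Submodule.starProjection_eq_self_iff.mpr hx]

lemma projW_of_memV (V : Submodule ℝ H) [CompleteSpace V] [CompleteSpace Vᗮ] {x : H}
    (hx : x ∈ V) : (Submodule.orthogonalProjectionOnto Vᗮ x : H) = 0 := by
  rw [Submodule.orthogonalProjectionOnto_apply_of_mem_orthogonal (Submodule.le_orthogonal_orthogonal V hx)]
  simp

end helpers

lemma decomp (V : Submodule ℝ H) [CompleteSpace V] (x : H) :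
    (Submodule.orthogonalProjectionOnto V x : H) + (Submodule.orthogonalProjectionOnto Vᗮ x : H) = x := by
  exact Submodule.starProjection_add_starProjection_orthogonal x

/-- `s = J_{λ (γA)_V} z`, expressed through the defining relation
`z - s ∈ λ • (γA)_V s`, holds iff `s` has the announced explicit form. -/
theorem resolvent_partialInv_characterization (V : Submodule ℝ H) [CompleteSpace V]
    (A : H → Set H) (hA : MaxMonotoneSV A) (γ lam : ℝ) (hγ : 0 < γ) (hlam : 0 < lam)
    (z s : H) :
    z - s ∈ (lam • partialInv V (fun x => (γ • A x : Set H)) s : Set H) ↔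
    ∃ p q : H, z = p + γ • q ∧
      lam⁻¹ • (Submodule.orthogonalProjectionOnto V q : H) + (Submodule.orthogonalProjectionOnto Vᗮ q : H)
        ∈ A ((Submodule.orthogonalProjectionOnto V p : H) + lam⁻¹ • (Submodule.orthogonalProjectionOnto Vᗮ p : H)) ∧
      s = (Submodule.orthogonalProjectionOnto V p : H) + γ • (Submodule.orthogonalProjectionOnto Vᗮ q : H) := by
  have hγ' : γ ≠ 0 := ne_of_gt hγ
  have hlam' : lam ≠ 0 := ne_of_gt hlam
  constructor
  · intro hmem
    obtain ⟨w, hw, hws⟩ := hmem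
    simp only [partialInv, Set.mem_setOf_eq,
      Set.mem_smul_set_iff_inv_smul_mem₀ hγ'] at hw
    -- generalize the four projections to opaque variables
    obtain ⟨sv, sw, hsv, hsw⟩ : ∃ sv sw : H,
        (Submodule.orthogonalProjectionOnto V s : H) = sv ∧ (Submodule.orthogonalProjectionOnto Vᗮ s : H) = sw :=
      ⟨_, _, rfl, rfl⟩
    obtain ⟨wv, ww, hwv, hww⟩ : ∃ wv ww : H,
        (Submodule.orthogonalProjectionOnto V w : H) = wv ∧ (Submodule.orthogonalProjectionOnto Vᗮ w : H) = ww :=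
      ⟨_, _, rfl, rfl⟩
    have hsvV : sv ∈ V := hsv ▸ (Submodule.orthogonalProjectionOnto V s).2
    have hswW : sw ∈ Vᗮ := hsw ▸ (Submodule.orthogonalProjectionOnto Vᗮ s).2
    have hwvV : wv ∈ V := hwv ▸ (Submodule.orthogonalProjectionOnto V w).2
    have hwwW : ww ∈ Vᗮ := hww ▸ (Submodule.orthogonalProjectionOnto Vᗮ w).2
    have hS : sv + sw = s := by rw [← hsv, ← hsw]; exact decomp V s
    have hW : wv + ww = w := by rw [← hwv, ← hww]; exact decomp V w
    rw [hsv, hsw, hwv, hww] at hw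
    have hz' : z = s + lam • w := by
      rw [show lam • w = z - s from hws]; abel
    refine ⟨sv + lam • ww, (lam * γ⁻¹) • wv + γ⁻¹ • sw, ?_, ?_, ?_⟩
    · rw [hz', ← hS, ← hW]
      match_scalars <;> field_simp
    · have e1 : (Submodule.orthogonalProjectionOnto V (sv + lam • ww) : H) = sv := by
        simp [map_add, map_smul, projV_of_memV V hsvV, projV_of_memW V hwwW]
      have e2 : (Submodule.orthogonalProjectionOnto Vᗮ (sv + lam • ww) : H) = lam • ww := by
        simp [map_add, map_smul, projW_of_memV V hsvV, projW_of_memW V hwwW]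
      have e3 : (Submodule.orthogonalProjectionOnto V ((lam * γ⁻¹) • wv + γ⁻¹ • sw) : H)
          = (lam * γ⁻¹) • wv := by
        simp [map_add, map_smul, projV_of_memV V hwvV, projV_of_memW V hswW]
      have e4 : (Submodule.orthogonalProjectionOnto Vᗮ ((lam * γ⁻¹) • wv + γ⁻¹ • sw) : H)
          = γ⁻¹ • sw := by
        simp [map_add, map_smul, projW_of_memV V hwvV, projW_of_memW V hswW]
      rw [e1, e2, e3, e4]
      have harg : sv + lam⁻¹ • lam • ww = sv + ww := by
        rw [smul_smul, inv_mul_cancel₀ hlam', one_smul]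
      have helt : lam⁻¹ • (lam * γ⁻¹) • wv + γ⁻¹ • sw = γ⁻¹ • (wv + sw) := by
        match_scalars <;> field_simp
      rw [harg, helt]
      exact hw
    · have e1 : (Submodule.orthogonalProjectionOnto V (sv + lam • ww) : H) = sv := by
        simp [map_add, map_smul, projV_of_memV V hsvV, projV_of_memW V hwwW]
      have e4 : (Submodule.orthogonalProjectionOnto Vᗮ ((lam * γ⁻¹) • wv + γ⁻¹ • sw) : H)
          = γ⁻¹ • sw := by
        simp [map_add, map_smul, projW_of_memV V hwvV, projW_of_memW V hswW]
      rw [e1, e4, smul_smul, mul_inv_cancel₀ hγ', one_smul, hS]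
  · rintro ⟨p, q, hz, hmem, hs⟩
    obtain ⟨pv, pw, hpv, hpw⟩ : ∃ pv pw : H,
        (Submodule.orthogonalProjectionOnto V p : H) = pv ∧ (Submodule.orthogonalProjectionOnto Vᗮ p : H) = pw :=
      ⟨_, _, rfl, rfl⟩
    obtain ⟨qv, qw, hqv, hqw⟩ : ∃ qv qw : H,
        (Submodule.orthogonalProjectionOnto V q : H) = qv ∧ (Submodule.orthogonalProjectionOnto Vᗮ q : H) = qw :=
      ⟨_, _, rfl, rfl⟩
    have hpvV : pv ∈ V := hpv ▸ (Submodule.orthogonalProjectionOnto V p).2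
    have hpwW : pw ∈ Vᗮ := hpw ▸ (Submodule.orthogonalProjectionOnto Vᗮ p).2
    have hqvV : qv ∈ V := hqv ▸ (Submodule.orthogonalProjectionOnto V q).2
    have hqwW : qw ∈ Vᗮ := hqw ▸ (Submodule.orthogonalProjectionOnto Vᗮ q).2
    have hP : pv + pw = p := by rw [← hpv, ← hpw]; exact decomp V p
    have hQ : qv + qw = q := by rw [← hqv, ← hqw]; exact decomp V q
    rw [hpv, hpw, hqv, hqw] at hmem
    rw [hpv, hqw] at hs
    rw [Set.mem_smul_set_iff_inv_smul_mem₀ hlam']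
    simp only [partialInv, Set.mem_setOf_eq,
      Set.mem_smul_set_iff_inv_smul_mem₀ hγ']
    have hzs : lam⁻¹ • (z - s) = lam⁻¹ • pw + (lam⁻¹ * γ) • qv := by
      rw [hz, hs, ← hP, ← hQ]
      match_scalars <;> field_simp <;> ring
    have h1 : (Submodule.orthogonalProjectionOnto V (lam⁻¹ • (z - s)) : H) = (lam⁻¹ * γ) • qv := by
      rw [hzs]
      simp [map_add, map_smul, projV_of_memV V hqvV, projV_of_memW V hpwW]
    have h2 : (Submodule.orthogonalProjectionOnto Vᗮ (lam⁻¹ • (z - s)) : H) = lam⁻¹ • pw := by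
      rw [hzs]
      simp [map_add, map_smul, projW_of_memV V hqvV, projW_of_memW V hpwW]
    have h3 : (Submodule.orthogonalProjectionOnto V s : H) = pv := by
      rw [hs]
      simp [map_add, map_smul, projV_of_memV V hpvV, projV_of_memW V hqwW]
    have h4 : (Submodule.orthogonalProjectionOnto Vᗮ s : H) = γ • qw := by
      rw [hs]
      simp [map_add, map_smul, projW_of_memV V hpvV, projW_of_memW V hqwW]
    rw [h1, h2, h3, h4]
    have helt : γ⁻¹ • ((lam⁻¹ * γ) • qv + γ • qw) = lam⁻¹ • qv + qw := by
      match_scalars <;> field_simp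
    rw [helt]
    exact hmem
end

section
/- Let H and G₁,...,G_m be real Hilbert spaces, M: H → H monotone and μ-Lipschitzian, and for each i let N_i^{-1}: G_i → G_i be monotone and ν_i-Lipschitzian, and L_i: H → G_i bounded linear. Then the operator B on the product space H ⊕ G₁ ⊕ ... ⊕ G_m defined by B(x, u₁,...,u_m) = (Mx + Σ_i L_i* u_i, N₁^{-1}u₁ − L₁x, ..., N_m^{-1}u_m − L_m x) is monotone and L-Lipschitzian with L = max{μ, ν₁,...,ν_m} + √(Σ_i ‖L_i‖²). -/
set_option maxHeartbeats 1600000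

open RealInnerProductSpace

/-- The operator `B(x,u) = (Mx + Σᵢ Lᵢ* uᵢ, N₁⁻¹u₁ − L₁x, …, N_m⁻¹u_m − L_m x)` on the
Hilbert direct sum is monotone and `L`-Lipschitzian with
`L = max{μ, ν₁,…,ν_m} + √(Σᵢ ‖Lᵢ‖²)`. -/
theorem prod_skew_operator_monotone_lipschitz
    {m : ℕ} [NeZero m] {H : Type*} {G : Fin m → Type*}
    [NormedAddCommGroup H] [InnerProductSpace ℝ H] [CompleteSpace H]
    [∀ i, NormedAddCommGroup (G i)] [∀ i, InnerProductSpace ℝ (G i)]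
    [∀ i, CompleteSpace (G i)]
    (M : H → H) (N : ∀ i, G i → G i) (Lop : ∀ i, H →L[ℝ] G i)
    (μ : ℝ) (ν : Fin m → ℝ) (hμ : 0 < μ) (hν : ∀ i, 0 < ν i)
    (hMmon : ∀ x y, 0 ≤ ⟪x - y, M x - M y⟫)
    (hMlip : ∀ x y, ‖M x - M y‖ ≤ μ * ‖x - y‖)
    (hNmon : ∀ i, ∀ u v : G i, 0 ≤ ⟪u - v, N i u - N i v⟫)
    (hNlip : ∀ i, ∀ u v : G i, ‖N i u - N i v‖ ≤ ν i * ‖u - v‖) :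
    (∀ z w : WithLp 2 (H × PiLp 2 G),
      0 ≤ ⟪z - w,
        ((WithLp.equiv 2 (H × PiLp 2 G)).symm
          (M z.ofLp.1 + ∑ i, (Lop i).adjoint (z.ofLp.2 i),
            (WithLp.equiv 2 _).symm fun i => N i (z.ofLp.2 i) - Lop i z.ofLp.1)) -
        ((WithLp.equiv 2 (H × PiLp 2 G)).symm
          (M w.ofLp.1 + ∑ i, (Lop i).adjoint (w.ofLp.2 i),
            (WithLp.equiv 2 _).symm fun i => N i (w.ofLp.2 i) - Lop i w.ofLp.1))⟫) ∧
    (∀ z w : WithLp 2 (H × PiLp 2 G),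
      ‖((WithLp.equiv 2 (H × PiLp 2 G)).symm
          (M z.ofLp.1 + ∑ i, (Lop i).adjoint (z.ofLp.2 i),
            (WithLp.equiv 2 _).symm fun i => N i (z.ofLp.2 i) - Lop i z.ofLp.1)) -
        ((WithLp.equiv 2 (H × PiLp 2 G)).symm
          (M w.ofLp.1 + ∑ i, (Lop i).adjoint (w.ofLp.2 i),
            (WithLp.equiv 2 _).symm fun i => N i (w.ofLp.2 i) - Lop i w.ofLp.1))‖
        ≤ (max μ (Finset.univ.sup' Finset.univ_nonempty ν) +
            Real.sqrt (∑ i, ‖Lop i‖ ^ 2)) * ‖z - w‖) := by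
  set K := max μ (Finset.univ.sup' Finset.univ_nonempty ν) with hKdef
  have hK0 : 0 ≤ K := le_trans hμ.le (le_max_left _ _)
  have hμK : μ ≤ K := le_max_left _ _
  have hνK : ∀ i, ν i ≤ K := fun i =>
    le_trans (Finset.le_sup' ν (Finset.mem_univ i)) (le_max_right _ _)
  constructor
  · intro z w
    have hfst : (M z.ofLp.1 + ∑ i, (Lop i).adjoint (z.ofLp.2 i)) -
        (M w.ofLp.1 + ∑ i, (Lop i).adjoint (w.ofLp.2 i))
        = (M z.ofLp.1 - M w.ofLp.1) + ∑ i, (Lop i).adjoint (z.ofLp.2 i - w.ofLp.2 i) := by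
      simp only [map_sub, Finset.sum_sub_distrib]
      abel
    rw [WithLp.prod_inner_apply]
    simp only [WithLp.ofLp_sub, Prod.fst_sub, Prod.snd_sub, WithLp.equiv_symm_apply, WithLp.ofLp_toLp]
    rw [hfst, PiLp.inner_apply]
    simp only [PiLp.sub_apply, WithLp.equiv_symm_apply, PiLp.toLp_apply]
    rw [inner_add_right, inner_sum]
    simp only [ContinuousLinearMap.adjoint_inner_right]
    have h2 : ∀ i, ⟪z.ofLp.2 i - w.ofLp.2 i, (N i (z.ofLp.2 i) - Lop i z.ofLp.1) - (N i (w.ofLp.2 i) - Lop i w.ofLp.1)⟫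
        = ⟪z.ofLp.2 i - w.ofLp.2 i, N i (z.ofLp.2 i) - N i (w.ofLp.2 i)⟫ - ⟪Lop i (z.ofLp.1 - w.ofLp.1), z.ofLp.2 i - w.ofLp.2 i⟫ := by
      intro i
      rw [show N i (z.ofLp.2 i) - Lop i z.ofLp.1 - (N i (w.ofLp.2 i) - Lop i w.ofLp.1)
            = N i (z.ofLp.2 i) - N i (w.ofLp.2 i) - Lop i (z.ofLp.1 - w.ofLp.1) by rw [map_sub]; abel,
        inner_sub_right, real_inner_comm (z.ofLp.2 i - w.ofLp.2 i) (Lop i (z.ofLp.1 - w.ofLp.1))]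
    simp only [h2]
    rw [Finset.sum_sub_distrib]
    have h3 := hMmon z.ofLp.1 w.ofLp.1
    have h4 : (0:ℝ) ≤ ∑ i, ⟪z.ofLp.2 i - w.ofLp.2 i, N i (z.ofLp.2 i) - N i (w.ofLp.2 i)⟫ :=
      Finset.sum_nonneg fun i _ => hNmon i _ _
    linarith
  · intro z w
    set a : WithLp 2 (H × PiLp 2 G) :=
      (WithLp.equiv 2 (H × PiLp 2 G)).symm (M z.ofLp.1 - M w.ofLp.1,
        (WithLp.equiv 2 _).symm fun i => N i (z.ofLp.2 i) - N i (w.ofLp.2 i)) with hadef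
    set s : WithLp 2 (H × PiLp 2 G) :=
      (WithLp.equiv 2 (H × PiLp 2 G)).symm (∑ i, (Lop i).adjoint (z.ofLp.2 i - w.ofLp.2 i),
        (WithLp.equiv 2 _).symm fun i => -(Lop i (z.ofLp.1 - w.ofLp.1))) with hsdef
    have key : ((WithLp.equiv 2 (H × PiLp 2 G)).symm
          (M z.ofLp.1 + ∑ i, (Lop i).adjoint (z.ofLp.2 i),
            (WithLp.equiv 2 _).symm fun i => N i (z.ofLp.2 i) - Lop i z.ofLp.1)) -
        ((WithLp.equiv 2 (H × PiLp 2 G)).symm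
          (M w.ofLp.1 + ∑ i, (Lop i).adjoint (w.ofLp.2 i),
            (WithLp.equiv 2 _).symm fun i => N i (w.ofLp.2 i) - Lop i w.ofLp.1)) = a + s := by
      have h1 : ((M z.ofLp.1 + ∑ i, (Lop i).adjoint (z.ofLp.2 i)) - (M w.ofLp.1 + ∑ i, (Lop i).adjoint (w.ofLp.2 i)))
          = (a + s).ofLp.1 := by
        simp only [hadef, hsdef, WithLp.ofLp_add, Prod.fst_add, WithLp.equiv_symm_apply, WithLp.ofLp_toLp, map_sub,
          Finset.sum_sub_distrib]
        abel
      have h2 : ∀ i, ((N i (z.ofLp.2 i) - Lop i z.ofLp.1) - (N i (w.ofLp.2 i) - Lop i w.ofLp.1)) = (a + s).ofLp.2 i := by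
        intro i
        simp only [hadef, hsdef, WithLp.ofLp_add, Prod.snd_add, WithLp.equiv_symm_apply, WithLp.ofLp_toLp, PiLp.add_apply,
          PiLp.toLp_apply, map_sub]
        abel
      have hfst : (((WithLp.equiv 2 (H × PiLp 2 G)).symm
          (M z.ofLp.1 + ∑ i, (Lop i).adjoint (z.ofLp.2 i),
            (WithLp.equiv 2 _).symm fun i => N i (z.ofLp.2 i) - Lop i z.ofLp.1)) -
        ((WithLp.equiv 2 (H × PiLp 2 G)).symm
          (M w.ofLp.1 + ∑ i, (Lop i).adjoint (w.ofLp.2 i),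
            (WithLp.equiv 2 _).symm fun i => N i (w.ofLp.2 i) - Lop i w.ofLp.1))).ofLp.1 = (a + s).ofLp.1 := by
        simpa only [WithLp.ofLp_sub, Prod.fst_sub, WithLp.equiv_symm_apply, WithLp.ofLp_toLp] using h1
      have hsnd : (((WithLp.equiv 2 (H × PiLp 2 G)).symm
          (M z.ofLp.1 + ∑ i, (Lop i).adjoint (z.ofLp.2 i),
            (WithLp.equiv 2 _).symm fun i => N i (z.ofLp.2 i) - Lop i z.ofLp.1)) -
        ((WithLp.equiv 2 (H × PiLp 2 G)).symm
          (M w.ofLp.1 + ∑ i, (Lop i).adjoint (w.ofLp.2 i),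
            (WithLp.equiv 2 _).symm fun i => N i (w.ofLp.2 i) - Lop i w.ofLp.1))).ofLp.2 = (a + s).ofLp.2 := by
        refine WithLp.ofLp_injective 2 (funext fun i => ?_)
        simpa only [WithLp.ofLp_sub, Prod.snd_sub, WithLp.equiv_symm_apply, WithLp.ofLp_toLp, PiLp.sub_apply,
          PiLp.toLp_apply] using h2 i
      exact WithLp.ofLp_injective 2 (Prod.ext hfst hsnd)
    rw [key]
    -- norm of z - w squared
    have hd2 : ‖z - w‖ ^ 2 = ‖z.ofLp.1 - w.ofLp.1‖ ^ 2 + ∑ i, ‖z.ofLp.2 i - w.ofLp.2 i‖ ^ 2 := by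
      rw [WithLp.prod_norm_sq_eq_of_L2, WithLp.sub_fst, WithLp.sub_snd,
        PiLp.norm_sq_eq_of_L2]
      simp only [PiLp.sub_apply]
      rfl
    have hdnn : (0:ℝ) ≤ ‖z - w‖ := norm_nonneg _
    -- bound on a
    have ha : ‖a‖ ≤ K * ‖z - w‖ := by
      rw [← pow_le_pow_iff_left₀ (norm_nonneg a) (mul_nonneg hK0 (norm_nonneg _)) two_ne_zero]
      rw [hadef, WithLp.prod_norm_sq_eq_of_L2, WithLp.equiv_symm_apply, WithLp.toLp_fst, WithLp.toLp_snd,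
        PiLp.norm_sq_eq_of_L2]
      simp only [WithLp.equiv_symm_apply, PiLp.toLp_apply]
      have hMb : ‖M z.ofLp.1 - M w.ofLp.1‖ ^ 2 ≤ K ^ 2 * ‖z.ofLp.1 - w.ofLp.1‖ ^ 2 := by
        calc ‖M z.ofLp.1 - M w.ofLp.1‖ ^ 2 ≤ (μ * ‖z.ofLp.1 - w.ofLp.1‖) ^ 2 :=
              pow_le_pow_left₀ (norm_nonneg _) (hMlip _ _) 2
          _ ≤ (K * ‖z.ofLp.1 - w.ofLp.1‖) ^ 2 :=
              pow_le_pow_left₀ (mul_nonneg hμ.le (norm_nonneg _))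
                (mul_le_mul_of_nonneg_right hμK (norm_nonneg _)) 2
          _ = K ^ 2 * ‖z.ofLp.1 - w.ofLp.1‖ ^ 2 := mul_pow _ _ _
      have hNb : ∀ i, ‖N i (z.ofLp.2 i) - N i (w.ofLp.2 i)‖ ^ 2 ≤ K ^ 2 * ‖z.ofLp.2 i - w.ofLp.2 i‖ ^ 2 := by
        intro i
        calc ‖N i (z.ofLp.2 i) - N i (w.ofLp.2 i)‖ ^ 2 ≤ (ν i * ‖z.ofLp.2 i - w.ofLp.2 i‖) ^ 2 :=
              pow_le_pow_left₀ (norm_nonneg _) (hNlip i _ _) 2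
          _ ≤ (K * ‖z.ofLp.2 i - w.ofLp.2 i‖) ^ 2 :=
              pow_le_pow_left₀ (mul_nonneg (hν i).le (norm_nonneg _))
                (mul_le_mul_of_nonneg_right (hνK i) (norm_nonneg _)) 2
          _ = K ^ 2 * ‖z.ofLp.2 i - w.ofLp.2 i‖ ^ 2 := mul_pow _ _ _
      calc ‖M z.ofLp.1 - M w.ofLp.1‖ ^ 2 + ∑ i, ‖N i (z.ofLp.2 i) - N i (w.ofLp.2 i)‖ ^ 2
          ≤ K ^ 2 * ‖z.ofLp.1 - w.ofLp.1‖ ^ 2 + ∑ i, K ^ 2 * ‖z.ofLp.2 i - w.ofLp.2 i‖ ^ 2 :=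
            add_le_add hMb (Finset.sum_le_sum fun i _ => hNb i)
        _ = (K * ‖z - w‖) ^ 2 := by rw [← Finset.mul_sum, mul_pow, hd2]; ring
    -- bound on s
    have hS0 : (0:ℝ) ≤ ∑ i, ‖Lop i‖ ^ 2 := Finset.sum_nonneg fun i _ => sq_nonneg _
    have hs : ‖s‖ ≤ Real.sqrt (∑ i, ‖Lop i‖ ^ 2) * ‖z - w‖ := by
      rw [← pow_le_pow_iff_left₀ (norm_nonneg s) (mul_nonneg (Real.sqrt_nonneg _) (norm_nonneg _)) two_ne_zero]
      rw [hsdef, WithLp.prod_norm_sq_eq_of_L2, WithLp.equiv_symm_apply, WithLp.toLp_fst, WithLp.toLp_snd,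
        PiLp.norm_sq_eq_of_L2]
      simp only [WithLp.equiv_symm_apply, PiLp.toLp_apply, norm_neg]
      have hb1 : ‖∑ i, (Lop i).adjoint (z.ofLp.2 i - w.ofLp.2 i)‖ ^ 2
          ≤ (∑ i, ‖Lop i‖ ^ 2) * ∑ i, ‖z.ofLp.2 i - w.ofLp.2 i‖ ^ 2 := by
        have h1 : ‖∑ i, (Lop i).adjoint (z.ofLp.2 i - w.ofLp.2 i)‖ ≤ ∑ i, ‖Lop i‖ * ‖z.ofLp.2 i - w.ofLp.2 i‖ := by
          refine le_trans (norm_sum_le _ _) (Finset.sum_le_sum fun i _ => ?_)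
          calc ‖(Lop i).adjoint (z.ofLp.2 i - w.ofLp.2 i)‖
              ≤ ‖(Lop i).adjoint‖ * ‖z.ofLp.2 i - w.ofLp.2 i‖ := (Lop i).adjoint.le_opNorm _
            _ = ‖Lop i‖ * ‖z.ofLp.2 i - w.ofLp.2 i‖ := by
                rw [ContinuousLinearMap.adjoint, LinearIsometryEquiv.norm_map]
        have h2 := Finset.sum_mul_sq_le_sq_mul_sq Finset.univ (fun i => ‖Lop i‖)
          (fun i => ‖z.ofLp.2 i - w.ofLp.2 i‖)
        calc ‖∑ i, (Lop i).adjoint (z.ofLp.2 i - w.ofLp.2 i)‖ ^ 2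
            ≤ (∑ i, ‖Lop i‖ * ‖z.ofLp.2 i - w.ofLp.2 i‖) ^ 2 := by
              have hnn : (0:ℝ) ≤ ∑ i, ‖Lop i‖ * ‖z.ofLp.2 i - w.ofLp.2 i‖ :=
                Finset.sum_nonneg fun i _ => mul_nonneg (norm_nonneg _) (norm_nonneg _)
              exact pow_le_pow_left₀ (norm_nonneg _) h1 2
          _ ≤ (∑ i, ‖Lop i‖ ^ 2) * ∑ i, ‖z.ofLp.2 i - w.ofLp.2 i‖ ^ 2 := h2
      have hb2 : ∀ i, ‖Lop i (z.ofLp.1 - w.ofLp.1)‖ ^ 2 ≤ ‖Lop i‖ ^ 2 * ‖z.ofLp.1 - w.ofLp.1‖ ^ 2 := by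
        intro i
        calc ‖Lop i (z.ofLp.1 - w.ofLp.1)‖ ^ 2 ≤ (‖Lop i‖ * ‖z.ofLp.1 - w.ofLp.1‖) ^ 2 :=
              pow_le_pow_left₀ (norm_nonneg _) ((Lop i).le_opNorm _) 2
          _ = ‖Lop i‖ ^ 2 * ‖z.ofLp.1 - w.ofLp.1‖ ^ 2 := mul_pow _ _ _
      calc ‖∑ i, (Lop i).adjoint (z.ofLp.2 i - w.ofLp.2 i)‖ ^ 2 + ∑ i, ‖Lop i (z.ofLp.1 - w.ofLp.1)‖ ^ 2
          ≤ (∑ i, ‖Lop i‖ ^ 2) * (∑ i, ‖z.ofLp.2 i - w.ofLp.2 i‖ ^ 2)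
            + ∑ i, ‖Lop i‖ ^ 2 * ‖z.ofLp.1 - w.ofLp.1‖ ^ 2 :=
            add_le_add hb1 (Finset.sum_le_sum fun i _ => hb2 i)
        _ = (∑ i, ‖Lop i‖ ^ 2) * ‖z - w‖ ^ 2 := by
            rw [hd2, ← Finset.sum_mul]; ring
        _ = (Real.sqrt (∑ i, ‖Lop i‖ ^ 2) * ‖z - w‖) ^ 2 := by
            rw [mul_pow, Real.sq_sqrt hS0]
    calc ‖a + s‖ ≤ ‖a‖ + ‖s‖ := norm_add_le a s
      _ ≤ K * ‖z - w‖ + Real.sqrt (∑ i, ‖Lop i‖ ^ 2) * ‖z - w‖ := add_le_add ha hs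
      _ = (K + Real.sqrt (∑ i, ‖Lop i‖ ^ 2)) * ‖z - w‖ := by ring
end

section
/- Let H and K be real Hilbert spaces and A: H → K a bounded linear operator. Then Id + A A* is invertible, and the orthogonal projection onto the subspace V = {(x, w) ∈ H ⊕ K : A x = w} is given by P_V(x, w) = (x − A*(Id + A A*)^{-1}(A x − w), w + (Id + A A*)^{-1}(A x − w)). -/
open RealInnerProductSpace

/-- `Id + A A*` is invertible and the orthogonal projection onto the graph subspace
`V = {(x,w) : A x = w}` of `H ⊕₂ K` is
`P_V(x,w) = (x − A*(Id+AA*)⁻¹(Ax−w), w + (Id+AA*)⁻¹(Ax−w))`, expressed through the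
variational characterization of the projection. -/
theorem graph_projection
    {H K : Type*} [NormedAddCommGroup H] [InnerProductSpace ℝ H] [CompleteSpace H]
    [NormedAddCommGroup K] [InnerProductSpace ℝ K] [CompleteSpace K]
    (A : H →L[ℝ] K) :
    ∃ B : K →L[ℝ] K,
      B.comp (ContinuousLinearMap.id ℝ K + A.comp A.adjoint) = ContinuousLinearMap.id ℝ K ∧
      (ContinuousLinearMap.id ℝ K + A.comp A.adjoint).comp B = ContinuousLinearMap.id ℝ K ∧
      ∀ x : H, ∀ w : K,
        A (x - A.adjoint (B (A x - w))) = w + B (A x - w) ∧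
        ∀ x' : H, ∀ w' : K, A x' = w' →
          ⟪(WithLp.equiv 2 (H × K)).symm (x, w) -
              (WithLp.equiv 2 (H × K)).symm
                (x - A.adjoint (B (A x - w)), w + B (A x - w)),
            (WithLp.equiv 2 (H × K)).symm (x', w')⟫ = 0 := by
  set T : K →L[ℝ] K := ContinuousLinearMap.id ℝ K + A.comp A.adjoint with hT
  set Bf : K →L[ℝ] K →L[ℝ] ℝ := (innerSL ℝ).comp T with hBf
  have hBf_apply : ∀ v w : K, Bf v w = ⟪T v, w⟫ := fun v w => rfl
  have coercive : IsCoercive Bf := by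
    refine ⟨1, one_pos, fun u => ?_⟩
    have h1 : ⟪T u, u⟫ = ⟪u, u⟫ + ⟪A.adjoint u, A.adjoint u⟫ := by
      simp [hT, inner_add_left, ContinuousLinearMap.adjoint_inner_left, real_inner_comm]
      rw [← ContinuousLinearMap.adjoint_inner_left A, real_inner_self_eq_norm_sq]
    rw [hBf_apply, h1, real_inner_self_eq_norm_mul_norm]
    nlinarith [real_inner_self_nonneg (x := A.adjoint u)]
  set E := coercive.continuousLinearEquivOfBilin with hE
  have hEeq : ∀ v : K, E v = T v := by
    intro v
    apply ext_inner_right ℝ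
    intro w
    rw [coercive.continuousLinearEquivOfBilin_apply, hBf_apply]
  have hTB : ∀ v : K, T (E.symm v) = v := by
    intro v; rw [← hEeq]; exact E.apply_symm_apply v
  refine ⟨E.symm.toContinuousLinearMap, ?_, ?_, ?_⟩
  · ext v
    simp only [ContinuousLinearMap.coe_comp', Function.comp_apply,
      ContinuousLinearMap.coe_id', id_eq, ContinuousLinearEquiv.coe_coe]
    rw [← hEeq v]
    exact E.symm_apply_apply v
  · ext v
    simp only [ContinuousLinearMap.coe_comp', Function.comp_apply,
      ContinuousLinearMap.coe_id', id_eq, ContinuousLinearEquiv.coe_coe]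
    exact hTB v
  · intro x w
    have key : ∀ v : K, A (A.adjoint (E.symm v)) = v - E.symm v := by
      intro v
      have h := hTB v
      simp only [hT, ContinuousLinearMap.add_apply, ContinuousLinearMap.coe_id', id_eq,
        ContinuousLinearMap.coe_comp', Function.comp_apply] at h
      exact eq_sub_of_add_eq' h
    constructor
    · simp only [ContinuousLinearEquiv.coe_coe, map_sub, key]
      abel
    · intro x' w' hx'
      have hsub : (WithLp.equiv 2 (H × K)).symm (x, w) -
          (WithLp.equiv 2 (H × K)).symm
            (x - A.adjoint (E.symm (A x - w)), w + E.symm (A x - w)) =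
          (WithLp.equiv 2 (H × K)).symm (A.adjoint (E.symm (A x - w)), -(E.symm (A x - w))) := by
        simp only [WithLp.equiv_symm_apply, ← WithLp.toLp_sub]
        congr 1
        simp [Prod.ext_iff]
      simp only [ContinuousLinearEquiv.coe_coe]
      rw [hsub, WithLp.prod_inner_apply]
      simp only [WithLp.equiv_symm_apply, WithLp.toLp_fst, WithLp.toLp_snd]
      rw [ContinuousLinearMap.adjoint_inner_left, inner_neg_left, ← hx']
      ring
end

section
/- Let H be a real Hilbert space, V a closed vector subspace, A: H → 2^H maximally monotone, B monotone and L-Lipschitzian, C β-cocoercive, with zer(A + B + C + N_V) ≠ ∅. Let χ = 4β/(1 + √(1 + 16β²L²)), γ ∈ (0, χ), and (x₀, y₀) ∈ V × V⊥. Then the sequences generated by p_n = J_{γA}(x_n + γ y_n − γ P_V(B+C)x_n), r_n = P_V p_n, x_{n+1} = r_n + γ P_V(B x_n − B r_n), y_{n+1} = y_n − (p_n − r_n)/γ, satisfy: x_n ∈ V and y_n ∈ V⊥ for all n, and (x_n) converges weakly to some x̄ with 0 ∈ A x̄ + B x̄ + C x̄ + N_V x̄, while (y_n) converges weakly to some ȳ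 ∈ V⊥ ∩ (A x̄ + P_V(B+C) x̄). -/
open RealInnerProductSpace Pointwise Filter Topology

variable {H : Type*} [NormedAddCommGroup H] [InnerProductSpace ℝ H] [CompleteSpace H]

/-- Weak convergence in a Hilbert space. -/
def WeakConv (x : ℕ → H) (xb : H) : Prop :=
  ∀ v : H, Tendsto (fun n => (⟪x n, v⟫ : ℝ)) atTop (𝓝 ⟪xb, v⟫)

section Aux

set_option linter.unusedSectionVars false
set_option linter.unusedVariables false

/-- Existence of a weak limit along an ultrafilter for a bounded sequence. -/
lemma aux_ultra_limit (w : ℕ → H) (M : ℝ) (hb : ∀ n, ‖w n‖ ≤ M) (U : Ultrafilter ℕ) :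
    ∃ wb : H, ∀ v : H, Tendsto (fun n => (⟪w n, v⟫ : ℝ)) (↑U) (𝓝 ⟪wb, v⟫) := by
  have hM : 0 ≤ M := le_trans (norm_nonneg _) (hb 0)
  have hex : ∀ v : H, ∃ c : ℝ, Tendsto (fun n => (⟪w n, v⟫ : ℝ)) (↑U) (𝓝 c) := by
    intro v
    have hmem : ∀ n, (⟪w n, v⟫ : ℝ) ∈ Set.Icc (-(M * ‖v‖)) (M * ‖v‖) := by
      intro n
      have h1 : |(⟪w n, v⟫ : ℝ)| ≤ ‖w n‖ * ‖v‖ := abs_real_inner_le_norm _ _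
      have h2 : ‖w n‖ * ‖v‖ ≤ M * ‖v‖ :=
        mul_le_mul_of_nonneg_right (hb n) (norm_nonneg v)
      constructor <;> [linarith [neg_abs_le (⟪w n, v⟫ : ℝ)]; linarith [le_abs_self (⟪w n, v⟫ : ℝ)]]
    obtain ⟨c, _, hc⟩ := (isCompact_Icc (a := -(M * ‖v‖)) (b := M * ‖v‖)).ultrafilter_le_nhds
      (U.map (fun n => (⟪w n, v⟫ : ℝ)))
      (by rw [le_principal_iff, Ultrafilter.mem_coe, Ultrafilter.mem_map]
          exact Filter.mem_of_superset Filter.univ_mem (fun n _ => hmem n))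
    exact ⟨c, hc⟩
  choose φ hφ using hex
  have hadd : ∀ v₁ v₂, φ (v₁ + v₂) = φ v₁ + φ v₂ := by
    intro v₁ v₂
    have h1 : Tendsto (fun n => (⟪w n, v₁⟫ : ℝ) + ⟪w n, v₂⟫) (↑U) (𝓝 (φ v₁ + φ v₂)) :=
      (hφ v₁).add (hφ v₂)
    have h2 := hφ (v₁ + v₂)
    simp only [inner_add_right] at h2
    exact tendsto_nhds_unique h2 h1
  have hsmul : ∀ (c : ℝ) v, φ (c • v) = c * φ v := by
    intro c v
    have h1 : Tendsto (fun n => c * (⟪w n, v⟫ : ℝ)) (↑U) (𝓝 (c * φ v)) := (hφ v).const_mul c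
    have h2 := hφ (c • v)
    simp only [inner_smul_right] at h2
    exact tendsto_nhds_unique h2 h1
  have hbound : ∀ v, |φ v| ≤ M * ‖v‖ := by
    intro v
    have : Tendsto (fun n => |(⟪w n, v⟫ : ℝ)|) (↑U) (𝓝 |φ v|) := (hφ v).abs
    refine le_of_tendsto this (Eventually.of_forall fun n => ?_)
    calc |(⟪w n, v⟫ : ℝ)| ≤ ‖w n‖ * ‖v‖ := abs_real_inner_le_norm _ _
      _ ≤ M * ‖v‖ := mul_le_mul_of_nonneg_right (hb n) (norm_nonneg v)
  let L : H →ₗ[ℝ] ℝ := { toFun := φ, map_add' := hadd, map_smul' := hsmul }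
  let L' : H →L[ℝ] ℝ := L.mkContinuous M (fun v => by rw [Real.norm_eq_abs]; exact hbound v)
  refine ⟨(InnerProductSpace.toDual ℝ H).symm L', fun v => ?_⟩
  have : (⟪(InnerProductSpace.toDual ℝ H).symm L', v⟫ : ℝ) = L' v :=
    InnerProductSpace.toDual_symm_apply
  rw [this]
  exact hφ v

/-- weak (along U) times strong (along atTop) convergence of inner products -/
lemma aux_weak_strong (U : Ultrafilter ℕ) (hU : (↑U : Filter ℕ) ≤ atTop)
    (q : ℕ → H) (wb : H) (Mq : ℝ) (hqb : ∀ n, ‖q n‖ ≤ Mq)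
    (hq : ∀ v : H, Tendsto (fun n => (⟪q n, v⟫ : ℝ)) (↑U) (𝓝 ⟪wb, v⟫))
    (c : ℕ → H) (cl : H) (hc : Tendsto (fun n => c n - cl) atTop (𝓝 0)) :
    Tendsto (fun n => (⟪q n, c n⟫ : ℝ)) (↑U) (𝓝 ⟪wb, cl⟫) := by
  have h1 : Tendsto (fun n => (⟪q n, c n - cl⟫ : ℝ)) (↑U) (𝓝 0) := by
    have hnorm : Tendsto (fun n => Mq * ‖c n - cl‖) atTop (𝓝 0) := by
      simpa using (hc.norm.const_mul Mq)
    have habs : ∀ n, |(⟪q n, c n - cl⟫ : ℝ)| ≤ Mq * ‖c n - cl‖ := fun n =>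
      (abs_real_inner_le_norm _ _).trans
        (mul_le_mul_of_nonneg_right (hqb n) (norm_nonneg _))
    have : Tendsto (fun n => (⟪q n, c n - cl⟫ : ℝ)) atTop (𝓝 0) := by
      refine squeeze_zero_norm habs ?_
      simpa using hnorm
    exact this.mono_left hU
  have h2 := (hq cl).add h1
  simp only [add_zero] at h2
  convert h2 using 2 with n
  rw [← inner_add_right]
  norm_num

/-- One step of FBHF: quasi-Fejér inequality. -/
lemma aux_step (w q ws wp a1 u1 d : H) (βp ℓ ε : ℝ)
    (hε : 0 < ε) (hℓ : 0 ≤ ℓ)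
    (h1 : 0 ≤ ⟪q - ws, (w - q) - a1 - d⟫)
    (h2 : 0 ≤ ⟪q - ws, a1 - u1⟫)
    (h3 : βp * ‖d‖ ^ 2 ≤ ⟪w - ws, d⟫)
    (h4 : ‖u1‖ ≤ ℓ * ‖w - q‖)
    (hwp : wp = q + u1) :
    ‖wp - ws‖ ^ 2 ≤ ‖w - ws‖ ^ 2 - (1 - ℓ ^ 2 - ε⁻¹) * ‖w - q‖ ^ 2
      - (2 * βp - ε) * ‖d‖ ^ 2 := by
  have e1 : ‖wp - ws‖ ^ 2 = ‖q - ws‖ ^ 2 + 2 * ⟪q - ws, u1⟫ + ‖u1‖ ^ 2 := by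
    rw [hwp, add_sub_right_comm]; exact norm_add_sq_real _ _
  have e2 : ‖q - ws‖ ^ 2 = ‖w - ws‖ ^ 2 - 2 * ⟪w - ws, w - q⟫ + ‖w - q‖ ^ 2 := by
    have : q - ws = (w - ws) - (w - q) := by abel
    rw [this]; exact norm_sub_sq_real _ _
  have e3 : ⟪q - ws, (w - q) - a1 - d⟫
      = ⟪q - ws, w - q⟫ - ⟪q - ws, a1⟫ - ⟪q - ws, d⟫ := by
    rw [sub_sub, inner_sub_right, inner_add_right]; ring
  have e4 : ⟪q - ws, a1 - u1⟫ = ⟪q - ws, a1⟫ - ⟪q - ws, u1⟫ := inner_sub_right _ _ _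
  have e5 : ⟪q - ws, w - q⟫ = ⟪w - ws, w - q⟫ - ‖w - q‖ ^ 2 := by
    have : q - ws = (w - ws) - (w - q) := by abel
    rw [this, inner_sub_left, real_inner_self_eq_norm_sq]
  have e6 : ⟪q - ws, d⟫ = ⟪w - ws, d⟫ - ⟪w - q, d⟫ := by
    have : q - ws = (w - ws) - (w - q) := by abel
    rw [this, inner_sub_left]
  have e7 : ⟪w - q, d⟫ ≤ ‖w - q‖ * ‖d‖ := real_inner_le_norm _ _
  have young : 2 * (‖w - q‖ * ‖d‖) ≤ ε⁻¹ * ‖w - q‖ ^ 2 + ε * ‖d‖ ^ 2 := by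
    have h := sq_nonneg (‖w - q‖ - ε * ‖d‖)
    have hε' : 0 < ε⁻¹ := inv_pos.mpr hε
    have key : ε⁻¹ * ‖w - q‖ ^ 2 + ε * ‖d‖ ^ 2 - 2 * (‖w - q‖ * ‖d‖)
        = ε⁻¹ * (‖w - q‖ - ε * ‖d‖) ^ 2 := by
      field_simp; ring
    nlinarith [mul_nonneg hε'.le h]
  have hu1 : ‖u1‖ ^ 2 ≤ ℓ ^ 2 * ‖w - q‖ ^ 2 := by
    nlinarith [norm_nonneg u1, norm_nonneg (w - q)]
  nlinarith [e1, e2, e3, e4, e5, e6, e7, young, hu1, h1, h2, h3]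

noncomputable def PcL (V : Submodule ℝ H) [V.HasOrthogonalProjection] : H →L[ℝ] H :=
  V.subtypeL.comp (Submodule.orthogonalProjection V)

variable (V : Submodule ℝ H) [V.HasOrthogonalProjection]

lemma PcL_apply (u : H) : PcL V u = ↑(Submodule.orthogonalProjection V u) := rfl
lemma PcL_mem (u : H) : PcL V u ∈ V := SetLike.coe_mem _
lemma PcL_of_mem {u : H} (hu : u ∈ V) : PcL V u = u := Submodule.starProjection_eq_self_iff.mpr hu
lemma PcL_of_orth {u : H} (hu : u ∈ Vᗮ) : PcL V u = 0 := by
  rw [PcL_apply, Submodule.orthogonalProjectionOnto_apply_of_mem_orthogonal hu,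
    Submodule.coe_zero]
lemma PcL_idem (u : H) : PcL V (PcL V u) = PcL V u := PcL_of_mem V (PcL_mem V u)
lemma PcL_sub_mem_orth (u : H) : u - PcL V u ∈ Vᗮ := Submodule.sub_starProjection_mem_orthogonal u
lemma PcL_adj (u t : H) : ⟪PcL V u, t⟫ = ⟪u, PcL V t⟫ :=
  Submodule.inner_starProjection_left_eq_right (K := V) u t
lemma PcL_inner_orth (u t : H) : ⟪PcL V u, t - PcL V t⟫ = 0 := by
  rw [PcL_adj, map_sub, PcL_idem, sub_self, inner_zero_right]
lemma PcL_norm_le (u : H) : ‖PcL V u‖ ≤ ‖u‖ := by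
  have h : ‖u‖ ^ 2 = ‖PcL V u‖ ^ 2 + ‖u - PcL V u‖ ^ 2 := by
    have e : u = PcL V u + (u - PcL V u) := by abel
    nth_rewrite 1 [e]
    rw [norm_add_sq_real, PcL_inner_orth]; ring
  nlinarith [norm_nonneg (PcL V u), norm_nonneg u, norm_nonneg (u - PcL V u)]
lemma inner_split (u t : H) :
    (⟪u, t⟫ : ℝ) = ⟪PcL V u, PcL V t⟫ + ⟪u - PcL V u, t - PcL V t⟫ := by
  have e : (⟪u, t⟫ : ℝ) = ⟪PcL V u + (u - PcL V u), PcL V t + (t - PcL V t)⟫ := by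
    congr 1 <;> abel
  rw [e, inner_add_left, inner_add_right, inner_add_right, PcL_inner_orth]
  have h2 : (⟪u - PcL V u, PcL V t⟫ : ℝ) = 0 := by
    rw [real_inner_comm, PcL_inner_orth]
  rw [h2]; ring

/-- membership in the partial inverse of `γ A` with respect to `V` -/
def memA (A : H → Set H) (γ : ℝ) (w v : H) : Prop :=
  γ⁻¹ • (PcL V v + (w - PcL V w)) ∈ A (PcL V w + (v - PcL V v))

variable {A : H → Set H} {γ : ℝ}

lemma memA_mono (hA : MonotoneSV A) (hγ : 0 < γ) {w v w' v' : H}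
    (h : memA V A γ w v) (h' : memA V A γ w' v') : 0 ≤ ⟪w - w', v - v'⟫ := by
  have key := hA _ _ _ _ h h'
  rw [← smul_sub, real_inner_smul_right] at key
  have hid : (⟪(PcL V w + (v - PcL V v)) - (PcL V w' + (v' - PcL V v')),
      (PcL V v + (w - PcL V w)) - (PcL V v' + (w' - PcL V w'))⟫ : ℝ)
      = ⟪w - w', v - v'⟫ := by
    have e1 : (PcL V w + (v - PcL V v)) - (PcL V w' + (v' - PcL V v'))
        = PcL V (w - w') + ((v - v') - PcL V (v - v')) := by
      simp only [map_sub]; abel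
    have e2 : (PcL V v + (w - PcL V w)) - (PcL V v' + (w' - PcL V w'))
        = PcL V (v - v') + ((w - w') - PcL V (w - w')) := by
      simp only [map_sub]; abel
    rw [e1, e2, inner_add_left, inner_add_right, inner_add_right, PcL_inner_orth]
    have h3 : (⟪(v - v') - PcL V (v - v'), PcL V (v - v')⟫ : ℝ) = 0 := by
      rw [real_inner_comm, PcL_inner_orth]
    have h4 : (⟪(v - v') - PcL V (v - v'), (w - w') - PcL V (w - w')⟫ : ℝ)
        = ⟪(w - w') - PcL V (w - w'), (v - v') - PcL V (v - v')⟫ := real_inner_comm _ _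
    rw [h3, h4]
    have := inner_split V (w - w') (v - v')
    linarith
  rw [hid] at key
  nlinarith [inv_pos.mpr hγ, key]

variable (J : H → H)

noncomputable def JAf (s : H) : H := PcL V (J s) + PcL V (J s) - J s + s - PcL V s

lemma PcL_JAf (s : H) : PcL V (JAf V J s) = PcL V (J s) := by
  simp only [JAf, map_add, map_sub, PcL_idem]; abel

lemma memA_JAf (hγ : γ ≠ 0) (hJ : ∀ z, z - J z ∈ (γ • A (J z) : Set H)) (s : H) :
    memA V A γ (JAf V J s) (s - JAf V J s) := by
  have eq1 : PcL V (s - JAf V J s) + (JAf V J s - PcL V (JAf V J s)) = s - J s := by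
    rw [map_sub, PcL_JAf]; simp only [JAf]; abel
  have eq2 : PcL V (JAf V J s) + ((s - JAf V J s) - PcL V (s - JAf V J s)) = J s := by
    rw [map_sub, PcL_JAf]; simp only [JAf]; abel
  rw [memA, eq1, eq2]
  exact (Set.mem_smul_set_iff_inv_smul_mem₀ hγ _ _).mp (hJ s)

lemma JAf_nonexp (hA : MonotoneSV A) (hγ : 0 < γ)
    (hJ : ∀ z, z - J z ∈ (γ • A (J z) : Set H)) (s s' : H) :
    ‖JAf V J s - JAf V J s'‖ ≤ ‖s - s'‖ := by
  have hmemJ : ∀ z, γ⁻¹ • (z - J z) ∈ A (J z) := fun z =>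
    (Set.mem_smul_set_iff_inv_smul_mem₀ (ne_of_gt hγ) _ _).mp (hJ z)
  have firm : (0:ℝ) ≤ ⟪J s - J s', (s - J s) - (s' - J s')⟫ := by
    have key := hA _ _ _ _ (hmemJ s) (hmemJ s')
    rw [← smul_sub, real_inner_smul_right] at key
    nlinarith [inv_pos.mpr hγ, key]
  set p := J s with hp
  set p' := J s' with hp'
  set δp := p - p' with hδp
  set δs := s - s' with hδs
  have firm' : ‖δp‖ ^ 2 ≤ ⟪δp, δs⟫ := by
    have e : (s - J s) - (s' - J s') = δs - δp := by rw [hδp, hδs]; abel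
    rw [e, inner_sub_right, real_inner_self_eq_norm_sq] at firm
    linarith
  have hq : JAf V J s - JAf V J s' = PcL V δp + ((δs - PcL V δs) - (δp - PcL V δp)) := by
    simp only [JAf, map_sub, ← hp, ← hp', hδp, hδs]; abel
  have horth : ((δs - PcL V δs) - (δp - PcL V δp)) ∈ Vᗮ :=
    Submodule.sub_mem _ (PcL_sub_mem_orth V δs) (PcL_sub_mem_orth V δp)
  have hX : ‖JAf V J s - JAf V J s'‖ ^ 2
      = ‖PcL V δp‖ ^ 2 + ‖(δs - PcL V δs) - (δp - PcL V δp)‖ ^ 2 := by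
    rw [hq, norm_add_sq_real, Submodule.inner_right_of_mem_orthogonal (PcL_mem V δp) horth]
    ring
  have hd : ‖δs - δp‖ ^ 2 = ‖PcL V δs - PcL V δp‖ ^ 2
      + ‖(δs - PcL V δs) - (δp - PcL V δp)‖ ^ 2 := by
    have e : δs - δp = (PcL V δs - PcL V δp) + ((δs - PcL V δs) - (δp - PcL V δp)) := by abel
    rw [e, norm_add_sq_real, Submodule.inner_right_of_mem_orthogonal
      (Submodule.sub_mem _ (PcL_mem V δs) (PcL_mem V δp)) horth]
    ring
  have hd2 : ‖δs - δp‖ ^ 2 = ‖δs‖ ^ 2 - 2 * ⟪δp, δs⟫ + ‖δp‖ ^ 2 := by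
    rw [norm_sub_sq_real, real_inner_comm δs δp]
  have hp2 : ‖δp‖ ^ 2 = ‖PcL V δp‖ ^ 2 + ‖δp - PcL V δp‖ ^ 2 := by
    have e : δp = PcL V δp + (δp - PcL V δp) := by abel
    nth_rewrite 1 [e]
    rw [norm_add_sq_real, PcL_inner_orth]; ring
  have hsq : ‖JAf V J s - JAf V J s'‖ ^ 2 ≤ ‖δs‖ ^ 2 := by
    nlinarith [sq_nonneg (‖PcL V δs - PcL V δp‖), sq_nonneg (‖δp - PcL V δp‖)]
  have h1 : (0:ℝ) ≤ ‖δs‖ := norm_nonneg _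
  nlinarith [norm_nonneg (JAf V J s - JAf V J s')]

lemma memA_of_rel (hA : MaxMonotoneSV A) (hγ : 0 < γ)
    (hJ : ∀ z, z - J z ∈ (γ • A (J z) : Set H)) (F : H → H) (ρ : ℝ)
    (hρ0 : 0 ≤ ρ) (hρ1 : ρ < 1) (hF : ∀ u v, ‖F u - F v‖ ≤ ρ * ‖u - v‖)
    (xb u : H) (hrel : ∀ w' v', memA V A γ w' v' → 0 ≤ ⟪xb - w', u - (v' + F w')⟫) :
    memA V A γ xb (u - F xb) := by
  have : Nonempty H := ⟨0⟩
  set Φ : H → H := fun v => JAf V J (xb + u - F v) with hΦ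
  have hlip : LipschitzWith ρ.toNNReal Φ := by
    apply LipschitzWith.of_dist_le_mul
    intro a b
    rw [dist_eq_norm, dist_eq_norm]
    calc ‖Φ a - Φ b‖ ≤ ‖(xb + u - F a) - (xb + u - F b)‖ :=
          JAf_nonexp V J hA.1 hγ hJ _ _
      _ = ‖F b - F a‖ := by congr 1; abel
      _ ≤ ρ * ‖b - a‖ := hF b a
      _ = ρ.toNNReal * ‖a - b‖ := by
          rw [Real.coe_toNNReal ρ hρ0, norm_sub_rev]
  have hcontr : ContractingWith ρ.toNNReal Φ :=
    ⟨by simpa [← NNReal.coe_lt_coe, Real.coe_toNNReal ρ hρ0] using hρ1, hlip⟩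
  set wf := hcontr.fixedPoint Φ with hwf
  have hfix : Φ wf = wf := hcontr.fixedPoint_isFixedPt
  have hm : memA V A γ wf (xb + u - F wf - wf) := by
    have := memA_JAf V J (ne_of_gt hγ) hJ (xb + u - F wf)
    rw [show JAf V J (xb + u - F wf) = wf from hfix] at this
    exact this
  have h0 := hrel wf (xb + u - F wf - wf) hm
  have he : u - (xb + u - F wf - wf + F wf) = wf - xb := by abel
  rw [he] at h0
  have hneg : (⟪xb - wf, wf - xb⟫ : ℝ) = -‖xb - wf‖ ^ 2 := by
    rw [show wf - xb = -(xb - wf) by abel, inner_neg_right, real_inner_self_eq_norm_sq]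
  rw [hneg] at h0
  have hxw : xb = wf := by
    have h1 : ‖xb - wf‖ ^ 2 ≤ 0 := by linarith
    have h2 := sq_eq_zero_iff.mp (le_antisymm h1 (sq_nonneg _))
    rwa [norm_sub_eq_zero_iff] at h2
  rw [show u - F xb = xb + u - F wf - wf from by rw [← hxw]; abel]
  rw [hxw] at hm ⊢
  exact hm


set_option linter.unusedSectionVars false

variable (V : Submodule ℝ H) [V.HasOrthogonalProjection] {A : H → Set H} {γ : ℝ}

lemma step_ineq (hA : MonotoneSV A) (hγ0 : 0 < γ) {β L ε : ℝ}
    (hβ : 0 < β) (hL : 0 < L) (hε : 0 < ε)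
    (B C : H → H)
    (hBmon : ∀ x y, 0 ≤ ⟪x - y, B x - B y⟫)
    (hBlip : ∀ x y, ‖B x - B y‖ ≤ L * ‖x - y‖)
    (hC : ∀ x y, β * ‖C x - C y‖ ^ 2 ≤ ⟪x - y, C x - C y⟫)
    (wn qn sn rn xn ww wn1 : H)
    (hPw : PcL V wn = xn) (hPq : PcL V qn = rn)
    (hsn : sn = wn - γ • PcL V (B xn + C xn))
    (hmemq : memA V A γ qn (sn - qn))
    (hmemZ : memA V A γ ww (-(γ • PcL V (B (PcL V ww) + C (PcL V ww)))))
    (hwn1 : wn1 = qn + (γ • PcL V (B xn) - γ • PcL V (B rn))) :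
    ‖wn1 - ww‖ ^ 2 ≤ ‖wn - ww‖ ^ 2 - (1 - (γ * L) ^ 2 - ε⁻¹) * ‖wn - qn‖ ^ 2
      - (2 * (β / γ) - ε) * ‖γ • PcL V (C xn) - γ • PcL V (C (PcL V ww))‖ ^ 2 := by
  have hadj : ∀ (u e : H), (⟪u, γ • PcL V e⟫ : ℝ) = γ * ⟪PcL V u, e⟫ := by
    intro u e
    rw [real_inner_smul_right, real_inner_comm, PcL_adj, real_inner_comm]
  refine aux_step wn qn ww wn1
    (γ • PcL V (B xn) - γ • PcL V (B (PcL V ww)))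
    (γ • PcL V (B xn) - γ • PcL V (B rn))
    (γ • PcL V (C xn) - γ • PcL V (C (PcL V ww)))
    (β / γ) (γ * L) ε hε (by positivity) ?h1 ?h2 ?h3 ?h4 hwn1
  case h1 =>
    have key := memA_mono V hA hγ0 hmemq hmemZ
    have e : (sn - qn) - (-(γ • PcL V (B (PcL V ww) + C (PcL V ww))))
        = (wn - qn) - (γ • PcL V (B xn) - γ • PcL V (B (PcL V ww)))
          - (γ • PcL V (C xn) - γ • PcL V (C (PcL V ww))) := by
      rw [hsn]
      simp only [map_add, smul_add]
      abel
    rwa [e] at key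
  case h2 =>
    have e : (γ • PcL V (B xn) - γ • PcL V (B (PcL V ww)))
        - (γ • PcL V (B xn) - γ • PcL V (B rn))
        = γ • PcL V (B rn - B (PcL V ww)) := by
      rw [map_sub, smul_sub]; abel
    rw [e, hadj, map_sub, hPq]
    exact mul_nonneg hγ0.le (hBmon _ _)
  case h3 =>
    have e : γ • PcL V (C xn) - γ • PcL V (C (PcL V ww))
        = γ • PcL V (C xn - C (PcL V ww)) := by
      rw [map_sub, smul_sub]
    rw [e, hadj]
    have e2 : PcL V (wn - ww) = xn - PcL V ww := by rw [map_sub, hPw]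
    rw [e2]
    have h1 := hC xn (PcL V ww)
    have h2 : ‖PcL V (C xn - C (PcL V ww))‖ ≤ ‖C xn - C (PcL V ww)‖ := PcL_norm_le V _
    have h3 : ‖γ • PcL V (C xn - C (PcL V ww))‖ = γ * ‖PcL V (C xn - C (PcL V ww))‖ := by
      rw [norm_smul, Real.norm_of_nonneg hγ0.le]
    rw [h3]
    have hβγ : β / γ * (γ * ‖PcL V (C xn - C (PcL V ww))‖) ^ 2
        = γ * β * ‖PcL V (C xn - C (PcL V ww))‖ ^ 2 := by
      field_simp
    rw [hβγ]
    have h7 : ‖PcL V (C xn - C (PcL V ww))‖ ^ 2 ≤ ‖C xn - C (PcL V ww)‖ ^ 2 :=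
      pow_le_pow_left₀ (norm_nonneg _) h2 2
    nlinarith [mul_le_mul_of_nonneg_left h1 hγ0.le,
      mul_le_mul_of_nonneg_left h7 (mul_pos hγ0 hβ).le]
  case h4 =>
    have e : γ • PcL V (B xn) - γ • PcL V (B rn) = γ • PcL V (B xn - B rn) := by
      rw [map_sub, smul_sub]
    rw [e]
    have h3 : ‖γ • PcL V (B xn - B rn)‖ = γ * ‖PcL V (B xn - B rn)‖ := by
      rw [norm_smul, Real.norm_of_nonneg hγ0.le]
    rw [h3]
    have h2 : ‖PcL V (B xn - B rn)‖ ≤ ‖B xn - B rn‖ := PcL_norm_le V _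
    have h4 : ‖B xn - B rn‖ ≤ L * ‖xn - rn‖ := hBlip _ _
    have h5 : ‖xn - rn‖ ≤ ‖wn - qn‖ := by
      rw [← hPw, ← hPq, ← map_sub]
      exact PcL_norm_le V _
    have h6 : L * ‖xn - rn‖ ≤ L * ‖wn - qn‖ := by
      exact mul_le_mul_of_nonneg_left h5 hL.le
    nlinarith


end Aux

section KeyLemma
set_option linter.unusedSectionVars false
set_option maxHeartbeats 1000000

variable (V : Submodule ℝ H) [V.HasOrthogonalProjection]

lemma aux_key {A : H → Set H} {γ β L : ℝ} (hA : MaxMonotoneSV A)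
    (hγ0 : 0 < γ) (hβ : 0 < β) (hL : 0 < L) (hγL1 : γ * L < 1)
    (B C : H → H) (J : H → H)
    (hBmon : ∀ x y, 0 ≤ ⟪x - y, B x - B y⟫)
    (hBlip : ∀ x y, ‖B x - B y‖ ≤ L * ‖x - y‖)
    (hC : ∀ x y, β * ‖C x - C y‖ ^ 2 ≤ ⟪x - y, C x - C y⟫)
    (hJ : ∀ z, z - J z ∈ (γ • A (J z) : Set H))
    (w q sq x r : ℕ → H) (z : H)
    (hPw : ∀ n, PcL V (w n) = x n) (hPq : ∀ n, PcL V (q n) = r n)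
    (hsqdef : sq = fun n => w n - γ • PcL V (B (x n) + C (x n)))
    (hmemq : ∀ n, memA V A γ (q n) (sq n - q n))
    (hwq : Tendsto (fun n => w n - q n) atTop (𝓝 0))
    (hdC : Tendsto (fun n => γ • PcL V (C (x n)) - γ • PcL V (C z)) atTop (𝓝 0))
    (Mw Mq : ℝ) (hMw : ∀ n, ‖w n‖ ≤ Mw) (hMq : ∀ n, ‖q n‖ ≤ Mq)
    (hadj : ∀ u e : H, (⟪u, γ • PcL V e⟫ : ℝ) = γ * ⟪PcL V u, e⟫) :
    ∀ U : Ultrafilter ℕ, (↑U : Filter ℕ) ≤ atTop →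
      ∃ wb : H, memA V A γ wb (-(γ • PcL V (B (PcL V wb) + C (PcL V wb)))) ∧
        ∀ v : H, Tendsto (fun n => (⟪w n, v⟫ : ℝ)) ↑U (𝓝 ⟪wb, v⟫) := by
  intro U hU
  obtain ⟨wb, hwb⟩ := aux_ultra_limit w Mw hMw U
  refine ⟨wb, ?_, hwb⟩
  have hqweak : ∀ v : H, Tendsto (fun n => (⟪q n, v⟫ : ℝ)) ↑U (𝓝 ⟪wb, v⟫) := by
    intro v
    have h2 : Tendsto (fun n => q n - w n) atTop (𝓝 0) := by
      have := hwq.neg; simpa [neg_sub] using this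
    have h1 : Tendsto (fun n => (⟪q n - w n, v⟫ : ℝ)) atTop (𝓝 0) := by
      simpa using h2.inner (tendsto_const_nhds (x := v))
    have h3 := (hwb v).add (h1.mono_left hU)
    rw [add_zero] at h3
    convert h3 using 2 with n
    rw [← inner_add_left]
    congr 1
    abel
  obtain ⟨cn, hcndef⟩ : ∃ cn : ℕ → H,
      cn = fun n => (sq n - q n) + γ • PcL V (B (r n)) := ⟨_, rfl⟩
  obtain ⟨cl, hcldef⟩ : ∃ cl : H, cl = -(γ • PcL V (C z)) := ⟨_, rfl⟩
  have hcstrong : Tendsto (fun n => cn n - cl) atTop (𝓝 0) := by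
    have hBt : Tendsto (fun n => γ • PcL V (B (x n)) - γ • PcL V (B (r n))) atTop (𝓝 0) := by
      rw [tendsto_zero_iff_norm_tendsto_zero]
      apply squeeze_zero (fun n => norm_nonneg _) (g := fun n => (γ * L) * ‖w n - q n‖)
      · intro n
        have e : γ • PcL V (B (x n)) - γ • PcL V (B (r n))
            = γ • PcL V (B (x n) - B (r n)) := by rw [map_sub, smul_sub]
        rw [e, norm_smul, Real.norm_of_nonneg hγ0.le]
        have h2 : ‖PcL V (B (x n) - B (r n))‖ ≤ ‖B (x n) - B (r n)‖ := PcL_norm_le V _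
        have h4 : ‖B (x n) - B (r n)‖ ≤ L * ‖x n - r n‖ := hBlip _ _
        have h5 : ‖x n - r n‖ ≤ ‖w n - q n‖ := by
          rw [← hPw n, ← hPq n, ← map_sub]
          exact PcL_norm_le V _
        calc γ * ‖PcL V (B (x n) - B (r n))‖
            ≤ γ * (L * ‖w n - q n‖) := by
              refine mul_le_mul_of_nonneg_left (h2.trans (h4.trans ?_)) hγ0.le
              exact mul_le_mul_of_nonneg_left h5 hL.le
          _ = γ * L * ‖w n - q n‖ := by ring
      · simpa using (hwq.norm.const_mul (γ * L))
    have he : ∀ n, cn n - cl = ((w n - q n)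
        - (γ • PcL V (C (x n)) - γ • PcL V (C z)))
        - (γ • PcL V (B (x n)) - γ • PcL V (B (r n))) := by
      intro n
      rw [hcndef, hcldef, hsqdef]
      simp only [map_add, smul_add]
      abel
    have h := (hwq.sub hdC).sub hBt
    simp only [sub_zero] at h
    exact Tendsto.congr (fun n => (he n).symm) h
  have hrel : ∀ w' v', memA V A γ w' v' →
      0 ≤ (⟪wb - w', cl - (v' + γ • PcL V (B (PcL V w')))⟫ : ℝ) := by
    intro w' v' hm
    have hptw : ∀ n, 0 ≤ (⟪q n - w', cn n - (v' + γ • PcL V (B (PcL V w')))⟫ : ℝ) := by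
      intro n
      have h1 := memA_mono V hA.1 hγ0 (hmemq n) hm
      have h2 : (0:ℝ) ≤ ⟪q n - w', γ • PcL V (B (r n)) - γ • PcL V (B (PcL V w'))⟫ := by
        have e : γ • PcL V (B (r n)) - γ • PcL V (B (PcL V w'))
            = γ • PcL V (B (r n) - B (PcL V w')) := by rw [map_sub, smul_sub]
        rw [e, hadj, map_sub, hPq]
        exact mul_nonneg hγ0.le (hBmon _ _)
      have e2 : cn n - (v' + γ • PcL V (B (PcL V w')))
          = ((sq n - q n) - v') + (γ • PcL V (B (r n)) - γ • PcL V (B (PcL V w'))) := by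
        simp only [hcndef]; abel
      rw [e2, inner_add_right]
      linarith
    have hlim : Tendsto
        (fun n => (⟪q n - w', cn n - (v' + γ • PcL V (B (PcL V w')))⟫ : ℝ)) ↑U
        (𝓝 ⟪wb - w', cl - (v' + γ • PcL V (B (PcL V w')))⟫) := by
      apply aux_weak_strong U hU (fun n => q n - w') (wb - w') (Mq + ‖w'‖)
      · intro n; exact (norm_sub_le _ _).trans (by linarith [hMq n])
      · intro v
        have h := (hqweak v).sub (tendsto_const_nhds (x := (⟪w', v⟫ : ℝ)))
        convert h using 2 with n
        · rw [inner_sub_left]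
        · rw [inner_sub_left]
      · have h : ∀ n, (cn n - (v' + γ • PcL V (B (PcL V w'))))
            - (cl - (v' + γ • PcL V (B (PcL V w')))) = cn n - cl := fun n => by abel
        exact Tendsto.congr (fun n => (h n).symm) hcstrong
    exact ge_of_tendsto hlim (Eventually.of_forall hptw)
  -- identify the cocoercive part on the weak limit
  have hb2 : γ • PcL V (C (PcL V wb)) = γ • PcL V (C z) := by
    have hmono2 : ∀ u : H,
        (0:ℝ) ≤ ⟪wb - u, γ • PcL V (C z) - γ • PcL V (C (PcL V u))⟫ := by
      intro u
      have hptw : ∀ n,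
          (0:ℝ) ≤ ⟪w n - u, γ • PcL V (C (x n)) - γ • PcL V (C (PcL V u))⟫ := by
        intro n
        have e : γ • PcL V (C (x n)) - γ • PcL V (C (PcL V u))
            = γ • PcL V (C (x n) - C (PcL V u)) := by rw [map_sub, smul_sub]
        rw [e, hadj, map_sub, hPw]
        have h1 := hC (x n) (PcL V u)
        refine mul_nonneg hγ0.le (le_trans ?_ h1)
        positivity
      have hlim : Tendsto
          (fun n => (⟪w n - u, γ • PcL V (C (x n)) - γ • PcL V (C (PcL V u))⟫ : ℝ)) ↑U
          (𝓝 ⟪wb - u, γ • PcL V (C z) - γ • PcL V (C (PcL V u))⟫) := by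
        apply aux_weak_strong U hU (fun n => w n - u) (wb - u) (Mw + ‖u‖)
        · intro n; exact (norm_sub_le _ _).trans (by linarith [hMw n])
        · intro v
          have h := (hwb v).sub (tendsto_const_nhds (x := (⟪u, v⟫ : ℝ)))
          convert h using 2 with n
          · rw [inner_sub_left]
          · rw [inner_sub_left]
        · have h : ∀ n, (γ • PcL V (C (x n)) - γ • PcL V (C (PcL V u)))
              - (γ • PcL V (C z) - γ • PcL V (C (PcL V u)))
              = γ • PcL V (C (x n)) - γ • PcL V (C z) := fun n => by abel
          exact Tendsto.congr (fun n => (h n).symm) hdC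
      exact ge_of_tendsto hlim (Eventually.of_forall hptw)
    obtain ⟨g, hgdef⟩ : ∃ g : H, g = γ • PcL V (C z) - γ • PcL V (C (PcL V wb)) := ⟨_, rfl⟩
    have hClip : ∀ a b : H, ‖C a - C b‖ ≤ β⁻¹ * ‖a - b‖ := by
      intro a b
      rcases eq_or_ne (C a - C b) 0 with h | h
      · rw [h, norm_zero]; positivity
      · have h1 := hC a b
        have h2 : (⟪a - b, C a - C b⟫ : ℝ) ≤ ‖a - b‖ * ‖C a - C b‖ := real_inner_le_norm _ _
        have h3 : 0 < ‖C a - C b‖ := norm_pos_iff.mpr h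
        have h4 : β * ‖C a - C b‖ ≤ ‖a - b‖ := by nlinarith
        have h5 := mul_le_mul_of_nonneg_left h4 (inv_pos.mpr hβ).le
        rwa [← mul_assoc, inv_mul_cancel₀ (ne_of_gt hβ), one_mul] at h5
    have hB2lip : ∀ a b : H, ‖γ • PcL V (C (PcL V a)) - γ • PcL V (C (PcL V b))‖
        ≤ (γ * β⁻¹) * ‖a - b‖ := by
      intro a b
      have e : γ • PcL V (C (PcL V a)) - γ • PcL V (C (PcL V b))
          = γ • PcL V (C (PcL V a) - C (PcL V b)) := by rw [map_sub, smul_sub]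
      rw [e, norm_smul, Real.norm_of_nonneg hγ0.le]
      calc γ * ‖PcL V (C (PcL V a) - C (PcL V b))‖
          ≤ γ * ‖C (PcL V a) - C (PcL V b)‖ :=
            mul_le_mul_of_nonneg_left (PcL_norm_le V _) hγ0.le
        _ ≤ γ * (β⁻¹ * ‖PcL V a - PcL V b‖) :=
            mul_le_mul_of_nonneg_left (hClip _ _) hγ0.le
        _ = γ * β⁻¹ * ‖PcL V (a - b)‖ := by rw [map_sub]; ring
        _ ≤ γ * β⁻¹ * ‖a - b‖ :=
            mul_le_mul_of_nonneg_left (PcL_norm_le V _) (by positivity)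
    have ht : (0:ℝ) < β / (2 * γ) := by positivity
    obtain ⟨Y, hYdef⟩ : ∃ Y : H,
        Y = γ • PcL V (C (PcL V (wb + (β / (2 * γ)) • g))) := ⟨_, rfl⟩
    obtain ⟨Δ2, hΔ2def⟩ : ∃ Δ2 : H, Δ2 = γ • PcL V (C (PcL V wb)) - Y := ⟨_, rfl⟩
    have h0 := hmono2 (wb + (β / (2 * γ)) • g)
    rw [← hYdef] at h0
    have e1 : wb - (wb + (β / (2 * γ)) • g) = -((β / (2 * γ)) • g) := by abel
    have e2 : γ • PcL V (C z) - Y = g + Δ2 := by rw [hΔ2def, hgdef]; abel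
    rw [e1, e2, inner_neg_left, real_inner_smul_left, inner_add_right,
      real_inner_self_eq_norm_sq] at h0
    have hΔ : ‖Δ2‖ ≤ (γ * β⁻¹) * ((β / (2 * γ)) * ‖g‖) := by
      have h := hB2lip wb (wb + (β / (2 * γ)) • g)
      rw [e1, norm_neg, norm_smul, Real.norm_of_nonneg ht.le, ← hYdef, ← hΔ2def] at h
      exact h
    have hcs : -(⟪g, Δ2⟫ : ℝ) ≤ ‖g‖ * ((γ * β⁻¹) * ((β / (2 * γ)) * ‖g‖)) := by
      calc -(⟪g, Δ2⟫ : ℝ) = ⟪g, -Δ2⟫ := by rw [inner_neg_right]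
        _ ≤ ‖g‖ * ‖-Δ2‖ := real_inner_le_norm _ _
        _ = ‖g‖ * ‖Δ2‖ := by rw [norm_neg]
        _ ≤ _ := mul_le_mul_of_nonneg_left hΔ (norm_nonneg _)
    have hsimp : (γ * β⁻¹) * ((β / (2 * γ)) * ‖g‖) = ‖g‖ / 2 := by
      field_simp
    have h5 : ‖g‖ ^ 2 + ⟪g, Δ2⟫ ≤ 0 := by nlinarith
    have h6 : ‖g‖ ^ 2 ≤ ‖g‖ * (‖g‖ / 2) := by
      rw [← hsimp]; linarith
    have h7 : ‖g‖ = 0 := by nlinarith [norm_nonneg g]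
    have h8 : g = 0 := norm_eq_zero.mp h7
    rw [hgdef] at h8
    exact (sub_eq_zero.mp h8).symm
  have hFlip : ∀ a b : H, ‖γ • PcL V (B (PcL V a)) - γ • PcL V (B (PcL V b))‖
      ≤ (γ * L) * ‖a - b‖ := by
    intro a b
    have e : γ • PcL V (B (PcL V a)) - γ • PcL V (B (PcL V b))
        = γ • PcL V (B (PcL V a) - B (PcL V b)) := by rw [map_sub, smul_sub]
    rw [e, norm_smul, Real.norm_of_nonneg hγ0.le]
    calc γ * ‖PcL V (B (PcL V a) - B (PcL V b))‖
        ≤ γ * ‖B (PcL V a) - B (PcL V b)‖ :=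
          mul_le_mul_of_nonneg_left (PcL_norm_le V _) hγ0.le
      _ ≤ γ * (L * ‖PcL V a - PcL V b‖) :=
          mul_le_mul_of_nonneg_left (hBlip _ _) hγ0.le
      _ = γ * L * ‖PcL V (a - b)‖ := by rw [map_sub]; ring
      _ ≤ γ * L * ‖a - b‖ :=
          mul_le_mul_of_nonneg_left (PcL_norm_le V _) (by positivity)
  have hmem := memA_of_rel V J hA hγ0 hJ (fun u => γ • PcL V (B (PcL V u))) (γ * L)
    (by positivity) hγL1 hFlip wb cl hrel
  have e : cl - γ • PcL V (B (PcL V wb)) = -(γ • PcL V (B (PcL V wb) + C (PcL V wb))) := by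
    rw [hcldef, ← hb2, map_add, smul_add]
    abel
  rwa [e] at hmem

end KeyLemma
set_option maxHeartbeats 4000000 in
/-- Convergence of the forward–partial inverse–half-forward splitting method
(Corollary of the main theorem). -/
theorem fpihf_convergence (V : Submodule ℝ H) [CompleteSpace V]
    (A : H → Set H) (B C : H → H) (L β γ : ℝ) (hL : 0 < L) (hβ : 0 < β)
    (hA : MaxMonotoneSV A)
    (hBmon : ∀ x y, 0 ≤ ⟪x - y, B x - B y⟫)
    (hBlip : ∀ x y, ‖B x - B y‖ ≤ L * ‖x - y‖)
    (hC : ∀ x y, β * ‖C x - C y‖ ^ 2 ≤ ⟪x - y, C x - C y⟫)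
    (hzer : ∃ z a n, a ∈ A z ∧ n ∈ normalCone V z ∧ a + B z + C z + n = 0)
    (hγ0 : 0 < γ) (hγχ : γ < 4 * β / (1 + Real.sqrt (1 + 16 * β ^ 2 * L ^ 2)))
    (J : H → H) (hJ : ∀ z, z - J z ∈ (γ • A (J z) : Set H))
    (x y p r : ℕ → H) (hx0 : x 0 ∈ V) (hy0 : y 0 ∈ Vᗮ)
    (hp : ∀ n, p n = J (x n + γ • y n -
      γ • (Submodule.orthogonalProjection V (B (x n) + C (x n)) : H)))
    (hr : ∀ n, r n = (Submodule.orthogonalProjection V (p n) : H))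
    (hxsucc : ∀ n, x (n + 1) = r n + γ • (Submodule.orthogonalProjection V (B (x n) - B (r n)) : H))
    (hysucc : ∀ n, y (n + 1) = y n - γ⁻¹ • (p n - r n)) :
    (∀ n, x n ∈ V) ∧ (∀ n, y n ∈ Vᗮ) ∧
    ∃ xb yb : H, WeakConv x xb ∧ WeakConv y yb ∧
      (∃ a n, a ∈ A xb ∧ n ∈ normalCone V xb ∧ a + B xb + C xb + n = 0) ∧
      yb ∈ Vᗮ ∧ yb - (Submodule.orthogonalProjection V (B xb + C xb) : H) ∈ A xb := by
  classical
  have hPcoe : ∀ u : H, ((Submodule.orthogonalProjection V u : H)) = PcL V u := fun _ => rfl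
  -- memberships
  have hxy : ∀ n, x n ∈ V ∧ y n ∈ Vᗮ := by
    intro n
    induction n with
    | zero => exact ⟨hx0, hy0⟩
    | succ n ih =>
      refine ⟨?_, ?_⟩
      · rw [hxsucc n]
        exact V.add_mem (by rw [hr n]; exact SetLike.coe_mem _)
          (V.smul_mem _ (SetLike.coe_mem _))
      · rw [hysucc n]
        refine Submodule.sub_mem _ ih.2 (Submodule.smul_mem _ _ ?_)
        rw [hr n]
        exact Submodule.sub_starProjection_mem_orthogonal _
  have hxV : ∀ n, x n ∈ V := fun n => (hxy n).1
  have hyV : ∀ n, y n ∈ Vᗮ := fun n => (hxy n).2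
  -- the governing sequence
  obtain ⟨w, hwdef⟩ : ∃ w : ℕ → H, w = fun n => x n + γ • y n := ⟨_, rfl⟩
  obtain ⟨sq, hsqdef⟩ : ∃ sq : ℕ → H,
      sq = fun n => x n + γ • y n - γ •(PcL V) (B (x n) + C (x n)) := ⟨_, rfl⟩
  obtain ⟨q, hqdef⟩ : ∃ q : ℕ → H, q = fun n => JAf V J (sq n) := ⟨_, rfl⟩
  have hpJ : ∀ n, p n = J (sq n) := by
    intro n; rw [hp n, hsqdef, hPcoe]
  have hPx : ∀ n,(PcL V) (x n) = x n := fun n => PcL_of_mem V (hxV n)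
  have hPy : ∀ n,(PcL V) (γ • y n) = 0 := fun n => by
    rw [map_smul, PcL_of_orth V (hyV n), smul_zero]
  have hPw : ∀ n,(PcL V) (w n) = x n := by
    intro n; rw [hwdef]; simp only [map_add, hPx, hPy]; rw [add_zero]
  have hwQ : ∀ n, w n -(PcL V) (w n) = γ • y n := by
    intro n; rw [hPw, hwdef]; simp only []; module
  have hPs : ∀ n,(PcL V) (sq n) = x n - γ •(PcL V) (B (x n) + C (x n)) := by
    intro n; rw [hsqdef]
    simp only [map_sub, map_add, hPx, hPy, map_smul, PcL_idem]
    abel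
  have hsQ : ∀ n, sq n -(PcL V) (sq n) = γ • y n := by
    intro n; rw [hPs, hsqdef]; simp only []; module
  have hrP : ∀ n, r n =(PcL V) (p n) := fun n => by rw [hr n, hPcoe]
  have hPq : ∀ n,(PcL V) (q n) = r n := by
    intro n; rw [hqdef, hrP]
    show PcL V (JAf V J (sq n)) = PcL V (p n)
    rw [PcL_JAf, hpJ]
  have hqw : ∀ n, q n = r n + r n - p n + γ • y n := by
    intro n
    have e : q n = PcL V (p n) + PcL V (p n) - p n + (sq n - PcL V (sq n)) := by
      rw [hqdef]
      show JAf V J (sq n) = _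
      rw [JAf, ← hpJ n]
      abel
    rw [e, ← hrP, hsQ]
  have hwsucc : ∀ n, w (n + 1) = q n + (γ • PcL V (B (x n)) - γ • PcL V (B (r n))) := by
    intro n
    rw [hwdef]
    simp only []
    have hyy : γ • (y n - γ⁻¹ • (p n - r n)) = γ • y n - (p n - r n) := by
      rw [smul_sub, smul_smul, mul_inv_cancel₀ (ne_of_gt hγ0), one_smul]
    rw [hxsucc n, hysucc n, hqw n, hPcoe, map_sub, hyy, smul_sub]
    abel
  have hmemq : ∀ n, memA V A γ (q n) (sq n - q n) := by
    intro n; rw [hqdef]; exact memA_JAf V J (ne_of_gt hγ0) hJ (sq n)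
  -- constants
  have hS2 : (Real.sqrt (1 + 16 * β ^ 2 * L ^ 2)) ^ 2 = 1 + 16 * β ^ 2 * L ^ 2 :=
    Real.sq_sqrt (by positivity)
  have hS0 : 0 ≤ Real.sqrt (1 + 16 * β ^ 2 * L ^ 2) := Real.sqrt_nonneg _
  have hS1 : 1 ≤ Real.sqrt (1 + 16 * β ^ 2 * L ^ 2) := by nlinarith
  have h4β : γ * (1 + Real.sqrt (1 + 16 * β ^ 2 * L ^ 2)) < 4 * β :=
    (lt_div_iff₀ (by linarith)).mp hγχ
  have hKey : 2 * β * (γ * L) ^ 2 + γ < 2 * β := by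
    set S := Real.sqrt (1 + 16 * β ^ 2 * L ^ 2) with hS
    have e1 : γ * S < 4 * β - γ := by nlinarith
    have e2 : 0 ≤ γ * S := by positivity
    have e3 : (γ * S) ^ 2 < (4 * β - γ) ^ 2 := by nlinarith
    have e4 : (γ * S) ^ 2 = γ ^ 2 + 16 * β ^ 2 * L ^ 2 * γ ^ 2 := by
      rw [mul_pow, hS2]; ring
    nlinarith
  have h2β : (0:ℝ) < 2 * β := by linarith
  have hγ2β : 0 < γ / (2 * β) := by positivity
  have hK0 : 0 < 1 - (γ * L) ^ 2 - γ / (2 * β) := by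
    have h5 : γ / (2 * β) < 1 - (γ * L) ^ 2 := by
      rw [div_lt_iff₀ h2β]; nlinarith
    linarith
  have hγL0 : 0 ≤ γ * L := by positivity
  have hγL1 : γ * L < 1 := by nlinarith
  obtain ⟨K, hKdef⟩ : ∃ K : ℝ, K = (1 - (γ * L) ^ 2 - γ / (2 * β)) / 2 := ⟨_, rfl⟩
  have hK : 0 < K := by rw [hKdef]; linarith
  obtain ⟨ε, hεdef⟩ : ∃ ε : ℝ, ε = (γ / (2 * β) + K)⁻¹ := ⟨_, rfl⟩
  have hε : 0 < ε := by rw [hεdef]; positivity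
  have hεinv : ε⁻¹ = γ / (2 * β) + K := by rw [hεdef, inv_inv]
  obtain ⟨κ, hκdef⟩ : ∃ κ : ℝ, κ = 2 * (β / γ) - ε := ⟨_, rfl⟩
  have hκ : 0 < κ := by
    rw [hκdef, hεdef]
    have h1 : (γ / (2 * β) + K)⁻¹ < (γ / (2 * β))⁻¹ :=
      (inv_lt_inv₀ (by linarith) hγ2β).mpr (lt_add_of_pos_right _ hK)
    have h2 : (γ / (2 * β))⁻¹ = 2 * (β / γ) := by
      field_simp
    linarith
  have hcoef : 1 - (γ * L) ^ 2 - ε⁻¹ = K := by rw [hεinv, hKdef]; ring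
  -- the zero point
  obtain ⟨z, a0, nn, ha0, hnn, hsum⟩ := hzer
  obtain ⟨hzV, hnnO⟩ : z ∈ V ∧ nn ∈ Vᗮ := hnn
  obtain ⟨ys, hysdef⟩ : ∃ ys : H, ys = a0 + PcL V (B z + C z) := ⟨_, rfl⟩
  have hysO : ys ∈ Vᗮ := by
    have ea : a0 = -(B z + C z) - nn := by
      have h2 : a0 = (a0 + B z + C z + nn) - (B z + C z) - nn := by abel
      rw [h2, hsum]; abel
    have e : ys = -((B z + C z) - PcL V (B z + C z)) - nn := by
      rw [hysdef, ea]; abel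
    rw [e]
    exact Submodule.sub_mem _ (Submodule.neg_mem _ (PcL_sub_mem_orth V _)) hnnO
  obtain ⟨ws, hwsdef⟩ : ∃ ws : H, ws = z + γ • ys := ⟨_, rfl⟩
  have hPws : PcL V ws = z := by
    rw [hwsdef, map_add, PcL_of_mem V hzV, map_smul, PcL_of_orth V hysO, smul_zero, add_zero]
  -- the invariant zero-set membership: memZ
  have hmemZws : memA V A γ ws (-(γ • PcL V (B (PcL V ws) + C (PcL V ws)))) := by
    rw [memA, hPws]
    have hvV : -(γ • PcL V (B z + C z)) ∈ V :=
      Submodule.neg_mem _ (Submodule.smul_mem _ _ (PcL_mem V _))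
    rw [PcL_of_mem V hvV]
    have e2 : z + (-(γ • PcL V (B z + C z)) - -(γ • PcL V (B z + C z))) = z := by abel
    rw [e2]
    have hγinv : ∀ t : H, γ⁻¹ • (γ • t) = t := fun t => by
      rw [smul_smul, inv_mul_cancel₀ (ne_of_gt hγ0), one_smul]
    have e3 : ws - z = γ • ys := by rw [hwsdef]; abel
    have e1 : γ⁻¹ • (-(γ • PcL V (B z + C z)) + (ws - z)) = a0 := by
      rw [e3, hysdef,
        show -(γ • PcL V (B z + C z)) + γ • (a0 + PcL V (B z + C z)) = γ • a0 from by module]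
      exact hγinv a0
    rw [e1]
    exact ha0
  -- the quasi-Fejér step
  have hstep : ∀ ww : H, memA V A γ ww (-(γ • PcL V (B (PcL V ww) + C (PcL V ww)))) →
      ∀ n, ‖w (n+1) - ww‖ ^ 2 ≤ ‖w n - ww‖ ^ 2 - K * ‖w n - q n‖ ^ 2
        - κ * ‖γ • PcL V (C (x n)) - γ • PcL V (C (PcL V ww))‖ ^ 2 := by
    intro ww hww n
    have h := step_ineq V hA.1 hγ0 hβ hL hε B C hBmon hBlip hC
      (w n) (q n) (sq n) (r n) (x n) ww (w (n+1)) (hPw n) (hPq n)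
      (by rw [hsqdef, hwdef]) (hmemq n) hww (hwsucc n)
    rw [hcoef, ← hκdef] at h
    exact h
  have hanti : ∀ ww : H, memA V A γ ww (-(γ • PcL V (B (PcL V ww) + C (PcL V ww)))) →
      Antitone fun n => ‖w n - ww‖ ^ 2 := by
    intro ww hww
    apply antitone_nat_of_succ_le
    intro n
    have h := hstep ww hww n
    nlinarith [mul_nonneg hK.le (sq_nonneg ‖w n - q n‖),
      mul_nonneg hκ.le (sq_nonneg ‖γ • PcL V (C (x n)) - γ • PcL V (C (PcL V ww))‖)]
  have conv_norm : ∀ ww : H, memA V A γ ww (-(γ • PcL V (B (PcL V ww) + C (PcL V ww)))) →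
      ∃ c, Tendsto (fun n => ‖w n - ww‖ ^ 2) atTop (𝓝 c) :=
    fun ww hww => ⟨_, tendsto_atTop_ciInf (hanti ww hww)
      ⟨0, by rintro _ ⟨n, rfl⟩; positivity⟩⟩
  obtain ⟨c0, hEc⟩ := conv_norm ws hmemZws
  have hEdiff : Tendsto (fun n => ‖w n - ws‖ ^ 2 - ‖w (n+1) - ws‖ ^ 2) atTop (𝓝 0) := by
    have h := hEc.sub (hEc.comp (tendsto_add_atTop_nat 1))
    simpa using h
  have hstepws : ∀ n, ‖w (n+1) - ws‖ ^ 2 ≤ ‖w n - ws‖ ^ 2 - K * ‖w n - q n‖ ^ 2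
      - κ * ‖γ • PcL V (C (x n)) - γ • PcL V (C z)‖ ^ 2 := by
    intro n
    have h := hstep ws hmemZws n
    rwa [hPws] at h
  have hwq2 : Tendsto (fun n => ‖w n - q n‖ ^ 2) atTop (𝓝 0) := by
    apply squeeze_zero (fun n => sq_nonneg _)
      (g := fun n => (‖w n - ws‖ ^ 2 - ‖w (n+1) - ws‖ ^ 2) / K)
    · intro n
      have h := hstepws n
      rw [le_div_iff₀ hK]
      nlinarith [mul_nonneg hκ.le (sq_nonneg ‖γ • PcL V (C (x n)) - γ • PcL V (C z)‖)]
    · simpa using hEdiff.div_const K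
  have hwq : Tendsto (fun n => w n - q n) atTop (𝓝 0) := by
    rw [tendsto_zero_iff_norm_tendsto_zero]
    have h := hwq2.sqrt
    rw [Real.sqrt_zero] at h
    convert h using 2 with n
    rw [Real.sqrt_sq (norm_nonneg _)]
  have hdC : Tendsto (fun n => γ • PcL V (C (x n)) - γ • PcL V (C z)) atTop (𝓝 0) := by
    rw [tendsto_zero_iff_norm_tendsto_zero]
    have hdC2 : Tendsto (fun n => ‖γ • PcL V (C (x n)) - γ • PcL V (C z)‖ ^ 2) atTop (𝓝 0) := by
      apply squeeze_zero (fun n => sq_nonneg _)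
        (g := fun n => (‖w n - ws‖ ^ 2 - ‖w (n+1) - ws‖ ^ 2) / κ)
      · intro n
        have h := hstepws n
        rw [le_div_iff₀ hκ]
        nlinarith [mul_nonneg hK.le (sq_nonneg ‖w n - q n‖)]
      · simpa using hEdiff.div_const κ
    have h := hdC2.sqrt
    rw [Real.sqrt_zero] at h
    convert h using 2 with n
    rw [Real.sqrt_sq (norm_nonneg _)]
  -- bounds
  obtain ⟨Mw, hMwdef⟩ : ∃ Mw : ℝ, Mw = ‖ws‖ + ‖w 0 - ws‖ := ⟨_, rfl⟩
  have hMw : ∀ n, ‖w n‖ ≤ Mw := by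
    intro n
    have h1 : ‖w n - ws‖ ^ 2 ≤ ‖w 0 - ws‖ ^ 2 := hanti ws hmemZws (Nat.zero_le n)
    have h2 : ‖w n - ws‖ ≤ ‖w 0 - ws‖ := by nlinarith [norm_nonneg (w n - ws), norm_nonneg (w 0 - ws)]
    calc ‖w n‖ = ‖ws + (w n - ws)‖ := by congr 1; abel
      _ ≤ ‖ws‖ + ‖w n - ws‖ := norm_add_le _ _
      _ ≤ Mw := by rw [hMwdef]; linarith
  obtain ⟨Mq, hMqdef⟩ : ∃ Mq : ℝ, Mq = Mw + Real.sqrt (‖w 0 - ws‖ ^ 2 / K) := ⟨_, rfl⟩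
  have hMq : ∀ n, ‖q n‖ ≤ Mq := by
    intro n
    have h := hstepws n
    have h1 : K * ‖w n - q n‖ ^ 2 ≤ ‖w 0 - ws‖ ^ 2 := by
      have h2 : ‖w n - ws‖ ^ 2 ≤ ‖w 0 - ws‖ ^ 2 := hanti ws hmemZws (Nat.zero_le n)
      nlinarith [sq_nonneg ‖w (n+1) - ws‖,
        mul_nonneg hκ.le (sq_nonneg ‖γ • PcL V (C (x n)) - γ • PcL V (C z)‖)]
    have h3 : ‖w n - q n‖ ^ 2 ≤ ‖w 0 - ws‖ ^ 2 / K := by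
      rw [le_div_iff₀ hK]; linarith [h1]
    have h4 : ‖w n - q n‖ ≤ Real.sqrt (‖w 0 - ws‖ ^ 2 / K) := by
      have h5 := Real.sq_sqrt (by positivity : (0:ℝ) ≤ ‖w 0 - ws‖ ^ 2 / K)
      nlinarith [norm_nonneg (w n - q n), Real.sqrt_nonneg (‖w 0 - ws‖ ^ 2 / K)]
    calc ‖q n‖ = ‖w n - (w n - q n)‖ := by congr 1; abel
      _ ≤ ‖w n‖ + ‖w n - q n‖ := norm_sub_le _ _
      _ ≤ Mq := by rw [hMqdef]; linarith [hMw n]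
  have hadj : ∀ u e : H, (⟪u, γ • PcL V e⟫ : ℝ) = γ * ⟪PcL V u, e⟫ := by
    intro u e
    rw [real_inner_smul_right, real_inner_comm, PcL_adj, real_inner_comm]
  have key := aux_key V hA hγ0 hβ hL hγL1 B C J hBmon hBlip hC hJ w q sq x r z hPw hPq
    (by rw [hsqdef, hwdef]) hmemq hwq hdC Mw Mq hMw hMq hadj
  have hU0 : (↑(Ultrafilter.of (atTop : Filter ℕ)) : Filter ℕ) ≤ atTop := Ultrafilter.of_le _
  obtain ⟨wb, hwbZ, hwbL⟩ := key (Ultrafilter.of atTop) hU0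
  -- uniqueness of ultrafilter weak limits (Opial)
  have huniq : ∀ U : Ultrafilter ℕ, (↑U : Filter ℕ) ≤ atTop → ∀ wb' : H,
      memA V A γ wb' (-(γ • PcL V (B (PcL V wb') + C (PcL V wb')))) →
      (∀ v : H, Tendsto (fun n => (⟪w n, v⟫ : ℝ)) ↑U (𝓝 ⟪wb', v⟫)) → wb' = wb := by
    intro U hU wb' hZ' hL'
    obtain ⟨cb, hcb⟩ := conv_norm wb hwbZ
    obtain ⟨cb', hcb'⟩ := conv_norm wb' hZ'
    have hid : ∀ n, (⟪w n, wb - wb'⟫ : ℝ)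
        = (‖w n - wb'‖ ^ 2 - ‖w n - wb‖ ^ 2 - ‖wb'‖ ^ 2 + ‖wb‖ ^ 2) / 2 := by
      intro n
      have e1 : ‖w n - wb'‖ ^ 2 = ‖w n‖ ^ 2 - 2 * ⟪w n, wb'⟫ + ‖wb'‖ ^ 2 :=
        norm_sub_sq_real _ _
      have e2 : ‖w n - wb‖ ^ 2 = ‖w n‖ ^ 2 - 2 * ⟪w n, wb⟫ + ‖wb‖ ^ 2 :=
        norm_sub_sq_real _ _
      have e3 : (⟪w n, wb - wb'⟫ : ℝ) = ⟪w n, wb⟫ - ⟪w n, wb'⟫ := inner_sub_right _ _ _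
      linarith
    have hs : Tendsto (fun n => (⟪w n, wb - wb'⟫ : ℝ)) atTop
        (𝓝 ((cb' - cb - ‖wb'‖ ^ 2 + ‖wb‖ ^ 2) / 2)) := by
      have h := (((hcb'.sub hcb).sub (tendsto_const_nhds (x := ‖wb'‖ ^ 2))).add
        (tendsto_const_nhds (x := ‖wb‖ ^ 2))).div_const 2
      exact Tendsto.congr (fun n => (hid n).symm) h
    have l1 : (⟪wb, wb - wb'⟫ : ℝ) = (cb' - cb - ‖wb'‖ ^ 2 + ‖wb‖ ^ 2) / 2 :=
      tendsto_nhds_unique (hwbL (wb - wb')) (hs.mono_left hU0)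
    have l2 : (⟪wb', wb - wb'⟫ : ℝ) = (cb' - cb - ‖wb'‖ ^ 2 + ‖wb‖ ^ 2) / 2 :=
      tendsto_nhds_unique (hL' (wb - wb')) (hs.mono_left hU)
    have h3 : ‖wb - wb'‖ ^ 2 = 0 := by
      have e := inner_sub_left (𝕜 := ℝ) wb wb' (wb - wb')
      rw [real_inner_self_eq_norm_sq] at e
      linarith
    have h4 : wb - wb' = 0 := by
      have := sq_eq_zero_iff.mp h3
      rwa [norm_eq_zero] at this
    have := sub_eq_zero.mp h4
    exact this.symm
  have hwconv : ∀ v : H, Tendsto (fun n => (⟪w n, v⟫ : ℝ)) atTop (𝓝 ⟪wb, v⟫) := by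
    intro v
    rw [tendsto_iff_ultrafilter]
    intro U hU
    obtain ⟨wb', hZ', hL'⟩ := key U hU
    rw [← huniq U hU wb' hZ' hL']
    exact hL' v
  -- final assembly
  have hyn : ∀ n, y n = γ⁻¹ • (w n - PcL V (w n)) := by
    intro n
    rw [hwQ n, smul_smul, inv_mul_cancel₀ (ne_of_gt hγ0), one_smul]
  refine ⟨hxV, hyV, PcL V wb, γ⁻¹ • (wb - PcL V wb), ?_, ?_, ?_, ?_, ?_⟩
  · -- WeakConv x
    intro v
    have h := hwconv (PcL V v)
    have hval : (⟪wb, PcL V v⟫ : ℝ) = ⟪PcL V wb, v⟫ := (PcL_adj V wb v).symm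
    rw [hval] at h
    refine Tendsto.congr (fun n => ?_) h
    rw [← PcL_adj, hPw n]
  · -- WeakConv y
    intro v
    have h := ((hwconv v).sub (hwconv (PcL V v))).const_mul γ⁻¹
    have e : γ⁻¹ * ((⟪wb, v⟫ : ℝ) - ⟪wb, PcL V v⟫) = ⟪γ⁻¹ • (wb - PcL V wb), v⟫ := by
      rw [real_inner_smul_left, inner_sub_left, PcL_adj]
    rw [e] at h
    refine Tendsto.congr (fun n => ?_) h
    rw [hyn n, real_inner_smul_left, inner_sub_left, PcL_adj]
  · -- the inclusion 0 ∈ (A + B + C + N_V)(xb)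
    have hv0V : -(γ • PcL V (B (PcL V wb) + C (PcL V wb))) ∈ V :=
      Submodule.neg_mem _ (Submodule.smul_mem _ _ (PcL_mem V _))
    have h := hwbZ
    rw [memA, PcL_of_mem V hv0V, sub_self, add_zero] at h
    have e5 : γ⁻¹ • (-(γ • PcL V (B (PcL V wb) + C (PcL V wb))) + (wb - PcL V wb))
        = γ⁻¹ • (wb - PcL V wb) - PcL V (B (PcL V wb) + C (PcL V wb)) := by
      rw [smul_add, smul_neg, smul_smul, inv_mul_cancel₀ (ne_of_gt hγ0), one_smul]
      abel
    rw [e5] at h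
    obtain ⟨ab, habdef⟩ : ∃ ab : H,
        ab = γ⁻¹ • (wb - PcL V wb) - PcL V (B (PcL V wb) + C (PcL V wb)) := ⟨_, rfl⟩
    rw [← habdef] at h
    refine ⟨ab, -(ab + B (PcL V wb) + C (PcL V wb)), h, ⟨PcL_mem V wb, ?_⟩, by abel⟩
    have e6 : -(ab + B (PcL V wb) + C (PcL V wb))
        = -(γ⁻¹ • (wb - PcL V wb))
          - ((B (PcL V wb) + C (PcL V wb)) - PcL V (B (PcL V wb) + C (PcL V wb))) := by
      rw [habdef]; abel
    rw [e6]
    exact Submodule.sub_mem _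
      (Submodule.neg_mem _ (Submodule.smul_mem _ _ (PcL_sub_mem_orth V wb)))
      (PcL_sub_mem_orth V _)
  · -- yb ∈ Vᗮ
    exact Submodule.smul_mem _ _ (PcL_sub_mem_orth V wb)
  · -- yb - P (B xb + C xb) ∈ A xb
    have hv0V : -(γ • PcL V (B (PcL V wb) + C (PcL V wb))) ∈ V :=
      Submodule.neg_mem _ (Submodule.smul_mem _ _ (PcL_mem V _))
    have h := hwbZ
    rw [memA, PcL_of_mem V hv0V, sub_self, add_zero] at h
    have e5 : γ⁻¹ • (-(γ • PcL V (B (PcL V wb) + C (PcL V wb))) + (wb - PcL V wb))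
        = γ⁻¹ • (wb - PcL V wb) - PcL V (B (PcL V wb) + C (PcL V wb)) := by
      rw [smul_add, smul_neg, smul_smul, inv_mul_cancel₀ (ne_of_gt hγ0), one_smul]
      abel
    rw [e5] at h
    rw [hPcoe]
    exact h
end
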